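/- arXiv:2303.02334 — 12 statements merged into one kernel-verified Lean document; each statement's English description precedes it below -/
import Mathlib

section
/- Assume n_i > 0 and O_i ≠ 0 for all i = 1,…,N, assume D_i = O_i + w_i ≠ 0 for all i, and assume ⟨V⟩_α ≠ 0 and ⟨V⟩_α + w ≠ 0. Then the residual vector ε_α = ⟨φ(D)⟩_α − ‖⟨V⟩_α‖ · φ(⟨V⟩_α + w) satisfies ‖ε_α‖ ≤ 2‖w‖²/‖⟨V⟩_α‖ + Σ_{i=1}^N α_i (π̃_i + √(Q_{i,n_iα})) + 2 Σ_{i=1}^N α_i ρ_i (π̃_α + ρ_i + 2π̃_i + √(Q_{i,n_iα})). -/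
open Finset
open scoped BigOperators RealInnerProductSpace

noncomputable def phi (x : EuclideanSpace ℝ (Fin 3)) : EuclideanSpace ℝ (Fin 3) := ‖x‖⁻¹ • x

namespace SWRE

abbrev E := EuclideanSpace ℝ (Fin 3)

lemma norm_phi (x : E) (hx : x ≠ 0) : ‖phi x‖ = 1 := by
  rw [phi, norm_smul, Real.norm_eq_abs, abs_of_nonneg (inv_nonneg.2 (norm_nonneg x)),
    inv_mul_cancel₀ (norm_ne_zero_iff.2 hx)]

lemma sq_le_imp {a b : ℝ} (ha : 0 ≤ a) (hb : 0 ≤ b) (h : a^2 ≤ b^2) : a ≤ b := by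
  nlinarith [sq_nonneg (a-b), sq_nonneg (a+b)]

lemma inner_phi_self (x : E) (hx : x ≠ 0) : ⟪x, phi x⟫ = ‖x‖ := by
  rw [phi, real_inner_smul_right, real_inner_self_eq_norm_sq]
  field_simp [norm_ne_zero_iff.2 hx]

/-- Sharp normalization Lipschitz bound. -/
lemma phi_sub_phi (x y : E) (hx : x ≠ 0) (hy : y ≠ 0) :
    ‖phi x - phi y‖ ≤ 2 * ‖x - y‖ / (‖x‖ + ‖y‖) := by
  have hp : (0:ℝ) < ‖x‖ := norm_pos_iff.2 hx
  have hq : (0:ℝ) < ‖y‖ := norm_pos_iff.2 hy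
  have hr : |⟪x,y⟫| ≤ ‖x‖ * ‖y‖ := abs_real_inner_le_norm x y
  have h1 : ‖phi x - phi y‖^2 = 2 - 2 * ⟪x,y⟫ / (‖x‖ * ‖y‖) := by
    rw [norm_sub_sq_real, norm_phi x hx, norm_phi y hy, phi, phi,
      real_inner_smul_left, real_inner_smul_right]
    field_simp
    ring
  have h2 : ‖x - y‖^2 = ‖x‖^2 - 2*⟪x,y⟫ + ‖y‖^2 := norm_sub_sq_real x y
  apply sq_le_imp (norm_nonneg _) (by positivity)
  have hA : 2 - 2 * ⟪x,y⟫ / (‖x‖ * ‖y‖) = (2*(‖x‖*‖y‖) - 2*⟪x,y⟫)/(‖x‖ * ‖y‖) := by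
    field_simp
  rw [h1, hA, div_pow, div_le_div_iff₀ (by positivity) (by positivity), mul_pow]
  rw [abs_le] at hr
  nlinarith [h2, sq_nonneg (‖x‖ - ‖y‖), mul_pos hp hq, sq_nonneg (‖x‖ + ‖y‖),
    mul_nonneg (mul_nonneg hp.le hq.le) (sq_nonneg (‖x‖ - ‖y‖)),
    mul_nonneg (add_nonneg (mul_nonneg hp.le hq.le) (neg_le_iff_add_nonneg.1 hr.1)) (sq_nonneg (‖x‖ - ‖y‖))]


theorem P_scaled (t c : ℝ) (ht : 0 < t) (h1 : c ≤ t) (h2 : -t ≤ c) :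
    0 ≤ 2*c - 2*c^2 + 2*t - 16*t*c + 17*t*c^2 + 2*t^2 + 7*t^3 - 16*t^3*c + 4*t^5 := by
  have htc : (0:ℝ) ≤ t + c := by linarith
  have htc' : (0:ℝ) ≤ t - c := by linarith
  nlinarith [mul_nonneg htc htc', sq_nonneg (1-t), mul_nonneg htc (sq_nonneg (1-t)), mul_nonneg htc' (sq_nonneg (1-t)), mul_nonneg ht.le (sq_nonneg (1-t^2)), mul_nonneg ht.le (sq_nonneg (c - t^2)), mul_nonneg ht.le (sq_nonneg (1 - 2*t)), mul_nonneg (mul_nonneg ht.le ht.le) (sq_nonneg (1-t)), mul_nonneg (mul_nonneg htc htc') ht.le, mul_nonneg (mul_nonneg htc htc') (sq_nonneg (1-t))]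

theorem P_hom (s t c : ℝ) (hs : 0 < s) (ht : 0 < t) (h1 : c ≤ t) (h2 : -t ≤ c) :
    t*s^2*(s-t)^2 + t*s^2*(c-s)^2 + 2*s^2*(s-t)*(c-s)*c ≤ 4*t*(t^2+s^2-2*s*c)^2 := by
  have hs' : s ≠ 0 := hs.ne'
  have h := P_scaled (t/s) (c/s) (div_pos ht hs)
    (by rw [div_le_div_iff_of_pos_right hs.gt]; exact h1)
    (by rw [← neg_div]; exact (div_le_div_iff_of_pos_right hs).2 h2)
  have hid : 4*t*(t^2+s^2-2*s*c)^2 - (t*s^2*(s-t)^2 + t*s^2*(c-s)^2 + 2*s^2*(s-t)*(c-s)*c)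
      = s^5 * (2*(c/s) - 2*(c/s)^2 + 2*(t/s) - 16*(t/s)*(c/s) + 17*(t/s)*(c/s)^2 + 2*(t/s)^2 + 7*(t/s)^3 - 16*(t/s)^3*(c/s) + 4*(t/s)^5) := by
    field_simp
    ring
  nlinarith [mul_nonneg (pow_pos hs 5).le h, hid]

lemma scalar_step (s t c e m X : ℝ) (hs : 0 < s) (ht : 0 < t) (hc1 : c ≤ t) (hc2 : -t ≤ c)
    (hce : c = s + e) (hm : 0 ≤ m) (hX0 : 0 ≤ X)
    (hX2 : X^2 = (t⁻¹-s⁻¹)^2*t^2 + 2*((t⁻¹-s⁻¹)*(e/s))*c + (e/s)^2)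
    (hrel : t^2 = s^2 + 2*s*e + m^2) : X ≤ 2*m^2/s^2 := by
  have hm2 : m^2 = t^2 + s^2 - 2*s*c := by rw [hrel, hce]; ring
  have key := P_hom s t c hs ht hc1 hc2
  rw [← hm2] at key
  have he' : e = c - s := by linarith
  apply sq_le_imp hX0 (by positivity)
  have hfin : X^2 * (s^2 * t * s^2)
      = t*s^2*(s-t)^2 + t*s^2*(c-s)^2 + 2*s^2*(s-t)*(c-s)*c := by
    rw [hX2, he']
    field_simp
    ring
  have h4 : (2*m^2/s^2)^2 * (s^2 * t * s^2) = 4*t*(m^2)^2 := by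
    field_simp
    ring
  have hpos : (0:ℝ) < s^2 * t * s^2 := by positivity
  rw [← mul_le_mul_iff_of_pos_right hpos, hfin, h4]
  exact key

/-- Linearization of the normalization map, with sharp constant 2. -/
theorem linearization (a h : E) (ha : a ≠ 0) (hab : a + h ≠ 0) :
    ‖phi (a+h) - phi a - ‖a‖⁻¹ • (h - ⟪h, phi a⟫ • phi a)‖ ≤ 2*‖h‖^2/‖a‖^2 := by
  have hs : (0:ℝ) < ‖a‖ := norm_pos_iff.2 ha
  have ht : (0:ℝ) < ‖a + h‖ := norm_pos_iff.2 hab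
  have hX : phi (a+h) - phi a - ‖a‖⁻¹ • (h - ⟪h, phi a⟫ • phi a)
      = (‖a+h‖⁻¹ - ‖a‖⁻¹) • (a+h) + (⟪h, phi a⟫/‖a‖) • phi a := by
    simp only [phi]
    match_scalars <;> field_simp <;> ring
  have hup : ‖phi a‖ = 1 := norm_phi a ha
  have hbu : ⟪a+h, phi a⟫ = ‖a‖ + ⟪h, phi a⟫ := by
    rw [inner_add_left, inner_phi_self a ha]
  have hcle : |⟪a+h, phi a⟫| ≤ ‖a+h‖ := by
    have := abs_real_inner_le_norm (a+h) (phi a)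
    rwa [hup, mul_one] at this
  rw [abs_le] at hcle
  have hX2 : ‖(‖a+h‖⁻¹ - ‖a‖⁻¹) • (a+h) + (⟪h, phi a⟫/‖a‖) • phi a‖^2
      = (‖a+h‖⁻¹-‖a‖⁻¹)^2*‖a+h‖^2 + 2*((‖a+h‖⁻¹-‖a‖⁻¹)*(⟪h, phi a⟫/‖a‖))*⟪a+h, phi a⟫
        + (⟪h, phi a⟫/‖a‖)^2 := by
    rw [norm_add_sq_real, norm_smul, norm_smul, real_inner_smul_left, real_inner_smul_right,
      hup, Real.norm_eq_abs, Real.norm_eq_abs, mul_pow, mul_pow, sq_abs, sq_abs]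
    ring
  have hrel : ‖a+h‖^2 = ‖a‖^2 + 2*‖a‖*⟪h, phi a⟫ + ‖h‖^2 := by
    have hah : ⟪a, h⟫ = ‖a‖ * ⟪h, phi a⟫ := by
      rw [phi, real_inner_smul_right, real_inner_comm]
      field_simp
    rw [norm_add_sq_real, hah]
    ring
  rw [hX]
  exact scalar_step ‖a‖ ‖a+h‖ ⟪a+h, phi a⟫ ⟪h, phi a⟫ ‖h‖ _ hs ht hcle.2 hcle.1 hbu
    (norm_nonneg h) (norm_nonneg _) hX2 hrel


lemma proj_norm_le (u h : E) (hu : ‖u‖ = 1) : ‖h - ⟪h,u⟫ • u‖ ≤ ‖h‖ := by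
  apply sq_le_imp (norm_nonneg _) (norm_nonneg _)
  rw [norm_sub_sq_real, real_inner_smul_right, norm_smul, Real.norm_eq_abs, hu, mul_one, sq_abs]
  nlinarith [sq_nonneg ⟪h,u⟫]

lemma proj_diff (u v h : E) (hu : ‖u‖ = 1) (hv : ‖v‖ = 1) :
    ‖(h - ⟪h,u⟫ • u) - (h - ⟪h,v⟫ • v)‖ ≤ 2 * ‖u - v‖ * ‖h‖ := by
  have hid : (h - ⟪h,u⟫ • u) - (h - ⟪h,v⟫ • v) = ⟪h,v⟫ • (v - u) + ⟪h, v - u⟫ • u := by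
    rw [inner_sub_right, sub_smul, smul_sub]
    abel
  rw [hid]
  calc ‖⟪h,v⟫ • (v - u) + ⟪h, v - u⟫ • u‖ ≤ ‖⟪h,v⟫ • (v - u)‖ + ‖⟪h, v - u⟫ • u‖ := norm_add_le _ _
    _ = |⟪h,v⟫| * ‖v - u‖ + |⟪h, v - u⟫| * 1 := by
        rw [norm_smul, norm_smul, Real.norm_eq_abs, Real.norm_eq_abs, hu]
    _ ≤ (‖h‖ * ‖v‖) * ‖v - u‖ + (‖h‖ * ‖v - u‖) * 1 := by
        gcongr
        · exact abs_real_inner_le_norm h v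
        · exact abs_real_inner_le_norm h (v - u)
    _ = 2 * ‖u - v‖ * ‖h‖ := by rw [hv, norm_sub_rev v u]; ring

lemma chord_sq_le (x y : E) (hx : ‖x‖ = 1) (hy : ‖y‖ = 1) :
    ‖x - y‖^2 ≤ (InnerProductGeometry.angle x y)^2 := by
  have hc := InnerProductGeometry.cos_angle x y
  rw [hx, hy, mul_one, div_one] at hc
  have hb := Real.one_sub_sq_div_two_le_cos (x := InnerProductGeometry.angle x y)
  have hn := norm_sub_sq_real x y
  rw [hx, hy] at hn
  rw [← hc] at hn
  linarith

lemma sum_sq_bound {N : ℕ} (c : Fin N → ℝ) (V : Fin N → E) (hV : ∀ j, ‖V j‖ = 1)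
    (hc : ∑ j, c j = 0) :
    ‖∑ j, c j • V j‖^2 ≤ ∑ j, ∑ j', |c j| * |c j'| * (InnerProductGeometry.angle (V j) (V j'))^2 / 2 := by
  have hinner : ∀ j j', ⟪V j, V j'⟫ = 1 - ‖V j - V j'‖^2/2 := fun j j' => by
    have h := norm_sub_sq_real (V j) (V j')
    rw [hV j, hV j'] at h
    linarith
  have hexp : ‖∑ j, c j • V j‖^2 = ∑ j, ∑ j', (c j * c j') * ⟪V j, V j'⟫ := by
    rw [← real_inner_self_eq_norm_sq, sum_inner]
    refine Finset.sum_congr rfl fun j _ => ?_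
    rw [real_inner_smul_left, inner_sum, Finset.mul_sum]
    refine Finset.sum_congr rfl fun j' _ => ?_
    rw [real_inner_smul_right]
    ring
  have hzero : ∑ j, ∑ j', (c j * c j') = (0:ℝ) := by
    rw [← Finset.sum_mul_sum]
    rw [hc, zero_mul]
  calc ‖∑ j, c j • V j‖^2 = ∑ j, ∑ j', (c j * c j') * ⟪V j, V j'⟫ := hexp
    _ = (∑ j, ∑ j', (c j * c j')) - ∑ j, ∑ j', (c j * c j') * ‖V j - V j'‖^2/2 := by
        rw [← Finset.sum_sub_distrib]
        refine Finset.sum_congr rfl fun j _ => ?_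
        rw [← Finset.sum_sub_distrib]
        refine Finset.sum_congr rfl fun j' _ => ?_
        rw [hinner j j']
        ring
    _ = - ∑ j, ∑ j', (c j * c j') * ‖V j - V j'‖^2/2 := by rw [hzero]; ring
    _ ≤ ∑ j, ∑ j', |c j| * |c j'| * (InnerProductGeometry.angle (V j) (V j'))^2 / 2 := by
        rw [neg_le]
        rw [← Finset.sum_neg_distrib]
        refine Finset.sum_le_sum fun j _ => ?_
        rw [← Finset.sum_neg_distrib]
        refine Finset.sum_le_sum fun j' _ => ?_
        have hd := chord_sq_le (V j) (V j') (hV j) (hV j')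
        have hab : -(c j * c j') ≤ |c j| * |c j'| := by
          rw [← abs_mul]
          exact neg_le_abs _
        have key := mul_le_mul hab hd (sq_nonneg _) (by positivity)
        linarith


lemma arith (B nn m q pa X : ℝ) (hB : 0 < B) (hBn : B ≤ nn) (hm : 0 ≤ m) (hq : 0 ≤ q)
    (hpa : 0 ≤ pa) (hX0 : 0 ≤ X) (hX : X ≤ (1 - B/nn) + q + pa) :
    2*m^2/B^2 + (B⁻¹ - nn⁻¹)*m + nn⁻¹*(2*X*m) ≤ 2*(m/B)*(pa + m/B + 2*(1-B/nn) + q) := by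
  have hn0 : 0 < nn := lt_of_lt_of_le hB hBn
  have hr : 0 ≤ m/B := by positivity
  have hp1 : B/nn ≤ 1 := (div_le_one hn0).2 hBn
  have hp0 : 0 < B/nn := div_pos hB hn0
  have e1 : 2*m^2/B^2 = 2*(m/B)*(m/B) := by field_simp
  have e2 : (B⁻¹ - nn⁻¹)*m = (m/B)*(1 - B/nn) := by field_simp
  have e3 : nn⁻¹*(2*X*m) = 2*X*(m/B)*(B/nn) := by field_simp
  rw [e1, e2, e3]
  nlinarith [mul_nonneg (mul_nonneg hX0 hr) (by linarith : (0:ℝ) ≤ 1 - B/nn),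
    mul_le_mul_of_nonneg_left hX hr, mul_nonneg hr (by linarith : (0:ℝ) ≤ 1 - B/nn)]

end SWRE

open SWRE

set_option maxHeartbeats 1000000

/-- Theorem (static-weight reduction error bound, Theorem 1 of the paper). -/
theorem static_weight_reduction_error
    (N : ℕ) (hN : 0 < N)
    (V : Fin N → EuclideanSpace ℝ (Fin 3)) (hV : ∀ i, ‖V i‖ = 1)
    (ω : Fin N → Fin N → ℝ) (hω : ∀ i j, ω i j = 0 ∨ ω i j = 1)
    (α : Fin N → ℝ) (hα : ∀ i, 0 ≤ α i) (hαsum : ∑ i, α i = 1)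
    (w : Fin N → EuclideanSpace ℝ (Fin 3))
    (n : Fin N → ℝ) (hn : ∀ i, n i = ∑ j, ω i j)
    (O : Fin N → EuclideanSpace ℝ (Fin 3)) (hO : ∀ i, O i = ∑ j, ω i j • V j)
    (D : Fin N → EuclideanSpace ℝ (Fin 3)) (hD : ∀ i, D i = O i + w i)
    (Vα : EuclideanSpace ℝ (Fin 3)) (hVα : Vα = ∑ i, α i • V i)
    (wb : EuclideanSpace ℝ (Fin 3)) (hwb : wb = ∑ i, (α i / n i) • w i)
    (Q : Fin N → ℝ)
    (hQ : ∀ i, Q i = (1 / n i ^ 2) *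
      ∑ j, ∑ j', |ω i j - n i * α j| * |ω i j' - n i * α j'| *
        InnerProductGeometry.angle (V j) (V j') ^ 2 / 2)
    (hn0 : ∀ i, 0 < n i) (hO0 : ∀ i, O i ≠ 0) (hD0 : ∀ i, D i ≠ 0)
    (hVα0 : Vα ≠ 0) (hVαw : Vα + wb ≠ 0) :
    ‖(∑ i, α i • phi (D i)) - ‖Vα‖ • phi (Vα + wb)‖ ≤
      2 * ‖wb‖ ^ 2 / ‖Vα‖
      + ∑ i, α i * ((1 - ‖O i‖ / n i) + Real.sqrt (Q i))
      + 2 * ∑ i, α i * (‖w i‖ / ‖O i‖) *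
          ((1 - ‖Vα‖) + ‖w i‖ / ‖O i‖ + 2 * (1 - ‖O i‖ / n i) + Real.sqrt (Q i)) := by
  have hs : (0:ℝ) < ‖Vα‖ := norm_pos_iff.2 hVα0
  have hs1 : ‖Vα‖ ≤ 1 := by
    rw [hVα]
    calc ‖∑ i, α i • V i‖ ≤ ∑ i, ‖α i • V i‖ := norm_sum_le _ _
      _ = ∑ i, α i := by
          refine Finset.sum_congr rfl fun i _ => ?_
          rw [norm_smul, hV, mul_one, Real.norm_eq_abs, abs_of_nonneg (hα i)]
      _ = 1 := hαsum
  have hωnn : ∀ i j, (0:ℝ) ≤ ω i j := fun i j => by rcases hω i j with h|h <;> simp [h]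
  have hOle : ∀ i, ‖O i‖ ≤ n i := fun i => by
    rw [hO, hn]
    calc ‖∑ j, ω i j • V j‖ ≤ ∑ j, ‖ω i j • V j‖ := norm_sum_le _ _
      _ = ∑ j, ω i j := by
          refine Finset.sum_congr rfl fun j _ => ?_
          rw [norm_smul, hV, mul_one, Real.norm_eq_abs, abs_of_nonneg (hωnn i j)]
  have hOpos : ∀ i, (0:ℝ) < ‖O i‖ := fun i => norm_pos_iff.2 (hO0 i)
  have hQs0 : ∀ i, 0 ≤ Real.sqrt (Q i) := fun i => Real.sqrt_nonneg _
  -- step Q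
  have hQkey : ∀ i, ‖(n i)⁻¹ • O i - Vα‖ ≤ Real.sqrt (Q i) := by
    intro i
    have hceq : (n i)⁻¹ • O i - Vα = ∑ j, (ω i j / n i - α j) • V j := by
      rw [hO i, hVα, Finset.smul_sum, ← Finset.sum_sub_distrib]
      refine Finset.sum_congr rfl fun j _ => ?_
      rw [smul_smul, ← sub_smul, div_eq_mul_inv, mul_comm]
    have hc0 : ∑ j, (ω i j / n i - α j) = 0 := by
      rw [Finset.sum_sub_distrib, ← Finset.sum_div, ← hn i, div_self (hn0 i).ne', hαsum, sub_self]
    have hb := sum_sq_bound (fun j => ω i j / n i - α j) V hV hc0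
    have hQe : Q i = ∑ j, ∑ j', |ω i j / n i - α j| * |ω i j' / n i - α j'| *
        InnerProductGeometry.angle (V j) (V j') ^ 2 / 2 := by
      rw [hQ i, Finset.mul_sum]
      refine Finset.sum_congr rfl fun j _ => ?_
      rw [Finset.mul_sum]
      refine Finset.sum_congr rfl fun j' _ => ?_
      have habs : ∀ k, |ω i k / n i - α k| = |ω i k - n i * α k| / n i := by
        intro k
        rw [show ω i k / n i - α k = (ω i k - n i * α k) / n i by
            rw [eq_div_iff (hn0 i).ne']; ring_nf; rw [mul_assoc, mul_inv_cancel₀ (hn0 i).ne', mul_one],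
          abs_div, abs_of_pos (hn0 i)]
      rw [habs j, habs j']
      field_simp
    calc ‖(n i)⁻¹ • O i - Vα‖ = Real.sqrt (‖(n i)⁻¹ • O i - Vα‖^2) :=
          (Real.sqrt_sq (norm_nonneg _)).symm
      _ ≤ Real.sqrt (Q i) := Real.sqrt_le_sqrt (by rw [hQe, hceq]; exact hb)
  have hπ : ∀ i, 0 ≤ 1 - ‖O i‖ / n i := fun i => by
    rw [sub_nonneg, div_le_one (hn0 i)]; exact hOle i
  -- step B2
  have hphiO : ∀ i, ‖phi (O i) - Vα‖ ≤ (1 - ‖O i‖ / n i) + Real.sqrt (Q i) := by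
    intro i
    have h1 : phi (O i) - (n i)⁻¹ • O i = (‖O i‖⁻¹ - (n i)⁻¹) • O i := by
      rw [phi, sub_smul]
    have h2 : ‖(‖O i‖⁻¹ - (n i)⁻¹) • O i‖ = 1 - ‖O i‖ / n i := by
      rw [norm_smul, Real.norm_eq_abs, abs_of_nonneg
        (by rw [sub_nonneg]; exact inv_anti₀ (hOpos i) (hOle i))]
      field_simp [(hOpos i).ne', (hn0 i).ne']
    calc ‖phi (O i) - Vα‖ ≤ ‖phi (O i) - (n i)⁻¹ • O i‖ + ‖(n i)⁻¹ • O i - Vα‖ :=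
          norm_sub_le_norm_sub_add_norm_sub _ _ _
      _ ≤ (1 - ‖O i‖ / n i) + Real.sqrt (Q i) := by
          rw [h1, h2]; exact add_le_add_right (hQkey i) _
  have hu1 : ‖phi Vα‖ = 1 := norm_phi Vα hVα0
  have hVαu : ‖Vα‖ • phi Vα = Vα := by rw [phi]; exact smul_inv_smul₀ hs.ne' Vα
  have hVαphi : ‖Vα - phi Vα‖ = 1 - ‖Vα‖ := by
    have h1 : Vα - phi Vα = (1 - ‖Vα‖⁻¹) • Vα := by rw [phi, sub_smul, one_smul]
    have h2 : 1 ≤ ‖Vα‖⁻¹ := by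
      rw [← inv_one]
      exact inv_anti₀ hs hs1
    rw [h1, norm_smul, Real.norm_eq_abs, abs_of_nonpos (by linarith), neg_sub, sub_mul,
      inv_mul_cancel₀ hs.ne', one_mul]
  -- step C
  have hC : ‖Vα + (wb - ⟪wb, phi Vα⟫ • phi Vα) - ‖Vα‖ • phi (Vα + wb)‖ ≤ 2 * ‖wb‖^2 / ‖Vα‖ := by
    have hlin := linearization Vα wb hVα0 hVαw
    have hid : Vα + (wb - ⟪wb, phi Vα⟫ • phi Vα) - ‖Vα‖ • phi (Vα + wb)
        = -(‖Vα‖ • (phi (Vα + wb) - phi Vα - ‖Vα‖⁻¹ • (wb - ⟪wb, phi Vα⟫ • phi Vα))) := by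
      rw [smul_sub, smul_sub, hVαu, smul_smul, mul_inv_cancel₀ hs.ne', one_smul]
      abel
    rw [hid, norm_neg, norm_smul, Real.norm_eq_abs, abs_of_pos hs]
    calc ‖Vα‖ * ‖phi (Vα + wb) - phi Vα - ‖Vα‖⁻¹ • (wb - ⟪wb, phi Vα⟫ • phi Vα)‖
        ≤ ‖Vα‖ * (2 * ‖wb‖^2 / ‖Vα‖^2) := mul_le_mul_of_nonneg_left hlin hs.le
      _ = 2 * ‖wb‖^2 / ‖Vα‖ := by field_simp
  -- step B1
  have hB1 : ∀ i, ‖phi (D i) - phi (O i) - (n i)⁻¹ • (w i - ⟪w i, phi Vα⟫ • phi Vα)‖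
      ≤ 2 * (‖w i‖ / ‖O i‖) * ((1 - ‖Vα‖) + ‖w i‖ / ‖O i‖ + 2 * (1 - ‖O i‖ / n i) + Real.sqrt (Q i)) := by
    intro i
    have hOw : O i + w i ≠ 0 := by rw [← hD]; exact hD0 i
    have hlin := linearization (O i) (w i) (hO0 i) hOw
    have hOu1 : ‖phi (O i)‖ = 1 := norm_phi (O i) (hO0 i)
    have hidi : phi (D i) - phi (O i) - (n i)⁻¹ • (w i - ⟪w i, phi Vα⟫ • phi Vα)
        = (phi (O i + w i) - phi (O i) - ‖O i‖⁻¹ • (w i - ⟪w i, phi (O i)⟫ • phi (O i)))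
          + (‖O i‖⁻¹ - (n i)⁻¹) • (w i - ⟪w i, phi (O i)⟫ • phi (O i))
          + (n i)⁻¹ • ((w i - ⟪w i, phi (O i)⟫ • phi (O i)) - (w i - ⟪w i, phi Vα⟫ • phi Vα)) := by
      rw [hD]
      module
    have hinv : (0:ℝ) ≤ ‖O i‖⁻¹ - (n i)⁻¹ := by
      rw [sub_nonneg]
      exact inv_anti₀ (hOpos i) (hOle i)
    have h2 : ‖(‖O i‖⁻¹ - (n i)⁻¹) • (w i - ⟪w i, phi (O i)⟫ • phi (O i))‖
        ≤ (‖O i‖⁻¹ - (n i)⁻¹) * ‖w i‖ := by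
      rw [norm_smul, Real.norm_eq_abs, abs_of_nonneg hinv]
      exact mul_le_mul_of_nonneg_left (proj_norm_le _ _ hOu1) hinv
    have hXb : ‖phi (O i) - phi Vα‖
        ≤ (1 - ‖O i‖ / n i) + Real.sqrt (Q i) + (1 - ‖Vα‖) := by
      calc ‖phi (O i) - phi Vα‖ ≤ ‖phi (O i) - Vα‖ + ‖Vα - phi Vα‖ :=
            norm_sub_le_norm_sub_add_norm_sub _ _ _
        _ ≤ (1 - ‖O i‖ / n i) + Real.sqrt (Q i) + (1 - ‖Vα‖) := by
            rw [hVαphi]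
            exact add_le_add_left (hphiO i) _
    have h3 : ‖(n i)⁻¹ • ((w i - ⟪w i, phi (O i)⟫ • phi (O i)) - (w i - ⟪w i, phi Vα⟫ • phi Vα))‖
        ≤ (n i)⁻¹ * (2 * ‖phi (O i) - phi Vα‖ * ‖w i‖) := by
      rw [norm_smul, Real.norm_eq_abs, abs_of_pos (inv_pos.2 (hn0 i))]
      exact mul_le_mul_of_nonneg_left (proj_diff _ _ _ hOu1 hu1) (inv_pos.2 (hn0 i)).le
    calc ‖phi (D i) - phi (O i) - (n i)⁻¹ • (w i - ⟪w i, phi Vα⟫ • phi Vα)‖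
        ≤ ‖phi (O i + w i) - phi (O i) - ‖O i‖⁻¹ • (w i - ⟪w i, phi (O i)⟫ • phi (O i))‖
          + ‖(‖O i‖⁻¹ - (n i)⁻¹) • (w i - ⟪w i, phi (O i)⟫ • phi (O i))‖
          + ‖(n i)⁻¹ • ((w i - ⟪w i, phi (O i)⟫ • phi (O i)) - (w i - ⟪w i, phi Vα⟫ • phi Vα))‖ := by
          rw [hidi]
          exact norm_add₃_le
      _ ≤ 2*‖w i‖^2/‖O i‖^2 + (‖O i‖⁻¹ - (n i)⁻¹) * ‖w i‖
          + (n i)⁻¹ * (2 * ‖phi (O i) - phi Vα‖ * ‖w i‖) := by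
          exact add_le_add (add_le_add hlin h2) h3
      _ ≤ 2 * (‖w i‖ / ‖O i‖) * ((1 - ‖Vα‖) + ‖w i‖ / ‖O i‖ + 2 * (1 - ‖O i‖ / n i) + Real.sqrt (Q i)) := by
          exact arith (‖O i‖) (n i) (‖w i‖) (Real.sqrt (Q i)) (1 - ‖Vα‖) (‖phi (O i) - phi Vα‖)
            (hOpos i) (hOle i) (norm_nonneg _) (hQs0 i) (by linarith) (norm_nonneg _) (by linarith [hXb])
  -- Pwb linearity
  have hPwb : (∑ i, (α i / n i) • (w i - ⟪w i, phi Vα⟫ • phi Vα)) = wb - ⟪wb, phi Vα⟫ • phi Vα := by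
    rw [hwb, sum_inner, Finset.sum_smul, ← Finset.sum_sub_distrib]
    refine Finset.sum_congr rfl fun i _ => ?_
    rw [real_inner_smul_left, smul_sub, smul_smul]
  -- decomposition
  have hsplit : (∑ i, α i • phi (D i)) - ‖Vα‖ • phi (Vα + wb)
      = (∑ i, α i • (phi (D i) - phi (O i) - (n i)⁻¹ • (w i - ⟪w i, phi Vα⟫ • phi Vα)))
        + (∑ i, α i • (phi (O i) - Vα))
        + (Vα + (wb - ⟪wb, phi Vα⟫ • phi Vα) - ‖Vα‖ • phi (Vα + wb)) := by
    have hA : ∑ i, α i • (phi (D i) - phi (O i) - (n i)⁻¹ • (w i - ⟪w i, phi Vα⟫ • phi Vα))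
        = (∑ i, α i • phi (D i)) - (∑ i, α i • phi (O i))
          - (∑ i, (α i / n i) • (w i - ⟪w i, phi Vα⟫ • phi Vα)) := by
      rw [← Finset.sum_sub_distrib, ← Finset.sum_sub_distrib]
      refine Finset.sum_congr rfl fun i _ => ?_
      rw [smul_sub, smul_sub, smul_smul, div_eq_mul_inv]
    have hB' : ∑ i, α i • (phi (O i) - Vα) = (∑ i, α i • phi (O i)) - Vα := by
      calc ∑ i, α i • (phi (O i) - Vα) = ∑ i, (α i • phi (O i) - α i • Vα) := by
            exact Finset.sum_congr rfl fun i _ => smul_sub _ _ _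
        _ = (∑ i, α i • phi (O i)) - ∑ i, α i • Vα := Finset.sum_sub_distrib _ _
        _ = (∑ i, α i • phi (O i)) - Vα := by rw [← Finset.sum_smul, hαsum, one_smul]
    rw [hA, hB', hPwb]
    abel
  -- assemble
  have hSA : ‖∑ i, α i • (phi (D i) - phi (O i) - (n i)⁻¹ • (w i - ⟪w i, phi Vα⟫ • phi Vα))‖
      ≤ ∑ i, α i * (2 * (‖w i‖ / ‖O i‖) * ((1 - ‖Vα‖) + ‖w i‖ / ‖O i‖ + 2 * (1 - ‖O i‖ / n i) + Real.sqrt (Q i))) := by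
    refine le_trans (norm_sum_le _ _) (Finset.sum_le_sum fun i _ => ?_)
    rw [norm_smul, Real.norm_eq_abs, abs_of_nonneg (hα i)]
    exact mul_le_mul_of_nonneg_left (hB1 i) (hα i)
  have hSB : ‖∑ i, α i • (phi (O i) - Vα)‖
      ≤ ∑ i, α i * ((1 - ‖O i‖ / n i) + Real.sqrt (Q i)) := by
    refine le_trans (norm_sum_le _ _) (Finset.sum_le_sum fun i _ => ?_)
    rw [norm_smul, Real.norm_eq_abs, abs_of_nonneg (hα i)]
    exact mul_le_mul_of_nonneg_left (hphiO i) (hα i)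
  have hmulsum : ∑ i, α i * (2 * (‖w i‖ / ‖O i‖) * ((1 - ‖Vα‖) + ‖w i‖ / ‖O i‖ + 2 * (1 - ‖O i‖ / n i) + Real.sqrt (Q i)))
      = 2 * ∑ i, α i * (‖w i‖ / ‖O i‖) * ((1 - ‖Vα‖) + ‖w i‖ / ‖O i‖ + 2 * (1 - ‖O i‖ / n i) + Real.sqrt (Q i)) := by
    rw [Finset.mul_sum]
    exact Finset.sum_congr rfl fun i _ => by ring
  calc ‖(∑ i, α i • phi (D i)) - ‖Vα‖ • phi (Vα + wb)‖
      ≤ ‖∑ i, α i • (phi (D i) - phi (O i) - (n i)⁻¹ • (w i - ⟪w i, phi Vα⟫ • phi Vα))‖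
        + ‖∑ i, α i • (phi (O i) - Vα)‖
        + ‖Vα + (wb - ⟪wb, phi Vα⟫ • phi Vα) - ‖Vα‖ • phi (Vα + wb)‖ := by
        rw [hsplit]
        exact norm_add₃_le
    _ ≤ 2 * ‖wb‖ ^ 2 / ‖Vα‖
        + ∑ i, α i * ((1 - ‖O i‖ / n i) + Real.sqrt (Q i))
        + 2 * ∑ i, α i * (‖w i‖ / ‖O i‖) * ((1 - ‖Vα‖) + ‖w i‖ / ‖O i‖ + 2 * (1 - ‖O i‖ / n i) + Real.sqrt (Q i)) := by
        rw [← hmulsum]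
        linarith [hSA, hSB, hC]
end

section
/- Assume n_i > 0 and O_i ≠ 0 for all i = 1,…,N, assume ⟨V⟩_α ≠ 0, and assume w_i = 0 for all i = 1,…,N. Then the residual vector ε_α = ⟨φ(D)⟩_α − ‖⟨V⟩_α‖ · φ(⟨V⟩_α) satisfies ‖ε_α‖ ≤ Σ_{i=1}^N α_i (π̃_i + √(Q_{i,n_iα})). -/
open Finset
open scoped BigOperators RealInnerProductSpace

lemma key_sq (N : ℕ) (V : Fin N → EuclideanSpace ℝ (Fin 3)) (hV : ∀ i, ‖V i‖ = 1)
    (c : Fin N → ℝ) (hc : ∑ j, c j = 0) :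
    ‖∑ j, c j • V j‖ ^ 2 ≤
      ∑ j, ∑ j', |c j| * |c j'| * InnerProductGeometry.angle (V j) (V j') ^ 2 / 2 := by
  have hinner : ∀ j j', ⟪V j, V j'⟫ = Real.cos (InnerProductGeometry.angle (V j) (V j')) := by
    intro j j'
    rw [InnerProductGeometry.cos_angle, hV j, hV j']
    ring
  have hns : ‖∑ j, c j • V j‖ ^ 2 = ∑ j, ∑ j', c j * c j' * ⟪V j, V j'⟫ := by
    rw [← real_inner_self_eq_norm_sq, sum_inner]
    refine Finset.sum_congr rfl fun j _ => ?_
    rw [real_inner_smul_left, inner_sum, Finset.mul_sum]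
    refine Finset.sum_congr rfl fun j' _ => ?_
    rw [real_inner_smul_right]; ring
  have h0 : ∑ j, ∑ j', c j * c j' = 0 := by
    rw [← Finset.sum_mul_sum, hc, zero_mul]
  have hstep : ‖∑ j, c j • V j‖ ^ 2 =
      ∑ j, ∑ j', c j * c j' * (Real.cos (InnerProductGeometry.angle (V j) (V j')) - 1) := by
    rw [hns]
    simp only [hinner]
    rw [← sub_zero (∑ j, ∑ j', c j * c j' * Real.cos (InnerProductGeometry.angle (V j) (V j'))),
      ← h0, ← Finset.sum_sub_distrib]
    refine Finset.sum_congr rfl fun j _ => ?_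
    rw [← Finset.sum_sub_distrib]
    exact Finset.sum_congr rfl fun j' _ => by ring
  rw [hstep]
  refine Finset.sum_le_sum fun j _ => Finset.sum_le_sum fun j' _ => ?_
  set θ := InnerProductGeometry.angle (V j) (V j') with hθ
  have h1 : 1 - θ ^ 2 / 2 ≤ Real.cos θ := Real.one_sub_sq_div_two_le_cos
  have h2 : Real.cos θ ≤ 1 := Real.cos_le_one θ
  have h4 : -(|c j| * |c j'|) ≤ c j * c j' := by rw [← abs_mul]; exact neg_abs_le _
  have h5 : 0 ≤ |c j| * |c j'| := by positivity
  nlinarith [mul_nonneg (by linarith : (0:ℝ) ≤ |c j| * |c j'| + c j * c j')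
    (by linarith : (0:ℝ) ≤ 1 - Real.cos θ), mul_le_mul_of_nonneg_left
    (by linarith : 1 - Real.cos θ ≤ θ ^ 2 / 2) h5]

/-- Corollary (static-weight reduction error with zero attraction and stimulus). -/
theorem static_weight_reduction_error_zero_w
    (N : ℕ) (hN : 0 < N)
    (V : Fin N → EuclideanSpace ℝ (Fin 3)) (hV : ∀ i, ‖V i‖ = 1)
    (ω : Fin N → Fin N → ℝ) (hω : ∀ i j, ω i j = 0 ∨ ω i j = 1)
    (α : Fin N → ℝ) (hα : ∀ i, 0 ≤ α i) (hαsum : ∑ i, α i = 1)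
    (w : Fin N → EuclideanSpace ℝ (Fin 3))
    (n : Fin N → ℝ) (hn : ∀ i, n i = ∑ j, ω i j)
    (O : Fin N → EuclideanSpace ℝ (Fin 3)) (hO : ∀ i, O i = ∑ j, ω i j • V j)
    (D : Fin N → EuclideanSpace ℝ (Fin 3)) (hD : ∀ i, D i = O i + w i)
    (Vα : EuclideanSpace ℝ (Fin 3)) (hVα : Vα = ∑ i, α i • V i)
    (Q : Fin N → ℝ)
    (hQ : ∀ i, Q i = (1 / n i ^ 2) *
      ∑ j, ∑ j', |ω i j - n i * α j| * |ω i j' - n i * α j'| *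
        InnerProductGeometry.angle (V j) (V j') ^ 2 / 2)
    (hn0 : ∀ i, 0 < n i) (hO0 : ∀ i, O i ≠ 0)
    (hVα0 : Vα ≠ 0) (hw0 : ∀ i, w i = 0) :
    ‖(∑ i, α i • phi (D i)) - ‖Vα‖ • phi Vα‖ ≤
      ∑ i, α i * ((1 - ‖O i‖ / n i) + Real.sqrt (Q i)) := by
  -- D i = O i
  have hDO : ∀ i, D i = O i := fun i => by rw [hD, hw0, add_zero]
  -- ‖Vα‖ • phi Vα = Vα
  have hphiVα : ‖Vα‖ • phi Vα = Vα := by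
    rw [phi, smul_smul, mul_inv_cancel₀ (norm_ne_zero_iff.mpr hVα0), one_smul]
  -- ‖O i‖ ≤ n i
  have hOn : ∀ i, ‖O i‖ ≤ n i := by
    intro i
    rw [hO, hn]
    refine (norm_sum_le _ _).trans (le_of_eq ?_)
    refine Finset.sum_congr rfl fun j _ => ?_
    rw [norm_smul, hV, mul_one, Real.norm_eq_abs, abs_of_nonneg]
    rcases hω i j with h | h <;> simp [h]
  -- per-i bound
  have hmain : ∀ i, ‖phi (O i) - Vα‖ ≤ (1 - ‖O i‖ / n i) + Real.sqrt (Q i) := by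
    intro i
    have hOpos : (0:ℝ) < ‖O i‖ := norm_pos_iff.mpr (hO0 i)
    have hni := hn0 i
    -- step A
    have hA : ‖phi (O i) - (n i)⁻¹ • O i‖ = 1 - ‖O i‖ / n i := by
      rw [phi, ← sub_smul, norm_smul, Real.norm_eq_abs, abs_of_nonneg
        (by rw [sub_nonneg]; exact inv_anti₀ hOpos (hOn i))]
      field_simp
    -- step B
    have hB : ‖(n i)⁻¹ • O i - Vα‖ ≤ Real.sqrt (Q i) := by
      set c : Fin N → ℝ := fun j => ω i j - n i * α j with hcdef
      have hc : ∑ j, c j = 0 := by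
        simp only [hcdef, Finset.sum_sub_distrib, ← Finset.mul_sum, hαsum, mul_one, ← hn, sub_self]
      have h1 : ∑ j, c j • V j = O i - n i • Vα := by
        rw [hO, hVα, Finset.smul_sum, ← Finset.sum_sub_distrib]
        refine Finset.sum_congr rfl fun j _ => ?_
        rw [smul_smul]
        show (ω i j - n i * α j) • V j = _
        rw [sub_smul]
      have hrepr : (n i)⁻¹ • O i - Vα = (n i)⁻¹ • ∑ j, c j • V j := by
        rw [h1, smul_sub, smul_smul, inv_mul_cancel₀ (ne_of_gt hni), one_smul]
      have hkey := key_sq N V hV c hc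
      have hsq : ‖(n i)⁻¹ • O i - Vα‖ ^ 2 ≤ Q i := by
        rw [hrepr, norm_smul, mul_pow, Real.norm_eq_abs, sq_abs, hQ, one_div, ← inv_pow]
        exact mul_le_mul_of_nonneg_left hkey (by positivity)
      calc ‖(n i)⁻¹ • O i - Vα‖ = Real.sqrt (‖(n i)⁻¹ • O i - Vα‖ ^ 2) :=
            (Real.sqrt_sq (norm_nonneg _)).symm
        _ ≤ Real.sqrt (Q i) := Real.sqrt_le_sqrt hsq
    calc ‖phi (O i) - Vα‖ ≤ ‖phi (O i) - (n i)⁻¹ • O i‖ + ‖(n i)⁻¹ • O i - Vα‖ :=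
          norm_sub_le_norm_sub_add_norm_sub _ _ _
      _ ≤ (1 - ‖O i‖ / n i) + Real.sqrt (Q i) := by rw [hA]; exact add_le_add_right hB _
  -- assemble
  have hdecomp : (∑ i, α i • phi (D i)) - ‖Vα‖ • phi Vα = ∑ i, α i • (phi (O i) - Vα) := by
    rw [hphiVα]
    simp only [hDO, smul_sub, Finset.sum_sub_distrib, ← Finset.sum_smul, hαsum, one_smul]
  rw [hdecomp]
  refine (norm_sum_le _ _).trans (Finset.sum_le_sum fun i _ => ?_)
  rw [norm_smul, Real.norm_eq_abs, abs_of_nonneg (hα i)]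
  exact mul_le_mul_of_nonneg_left (hmain i) (hα i)
end

section
/- Assume n_i > 0 and O_i ≠ 0 for all i = 1,…,N, assume D_i = O_i + w_i ≠ 0 for all i, assume ⟨V⟩_α ≠ 0 and ⟨V⟩_α + w ≠ 0, and assume that θ_{ij} = 0 for all i,j ∈ {1,…,N} (all directions aligned). Then the residual vector ε_α = ⟨φ(D)⟩_α − ‖⟨V⟩_α‖ · φ(⟨V⟩_α + w) satisfies ‖ε_α‖ ≤ 2(‖w‖² + Σ_{i=1}^N α_i ‖w_i‖²). -/
open Finset
open scoped BigOperators RealInnerProductSpace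

lemma phi_smul (c : ℝ) (hc : 0 < c) (x : EuclideanSpace ℝ (Fin 3)) : phi (c • x) = phi x := by
  rcases eq_or_ne x 0 with rfl | hx
  · simp [phi]
  · unfold phi
    rw [norm_smul, Real.norm_eq_abs, abs_of_pos hc, smul_smul, mul_inv]
    have h : c⁻¹ * ‖x‖⁻¹ * c = ‖x‖⁻¹ := by
      rw [mul_comm c⁻¹ ‖x‖⁻¹, mul_assoc, inv_mul_cancel₀ hc.ne', mul_one]
    rw [h]

lemma scalarG (r a : ℝ) (hr : 0 < r) (ha : a^2 ≤ r^2) :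
    0 ≤ (17*r-2)*a^2 - (16*r^3+16*r-2)*a + 4*r^5 + 7*r^3 + 2*r^2 + 2*r := by
  have ha1 : -r ≤ a := by nlinarith
  have ha2 : a ≤ r := by nlinarith
  rcases le_or_gt r (2/17) with hc | hc
  · nlinarith [mul_nonneg (by linarith : (0:ℝ) ≤ r-a) (by positivity : (0:ℝ) ≤ 4*r^5+16*r^4+24*r^3+16*r^2),
      mul_nonneg (by linarith : (0:ℝ) ≤ r+a) (by positivity : (0:ℝ) ≤ 4*r*(r-1)^4),
      mul_nonneg (mul_nonneg (by linarith : (0:ℝ) ≤ 2*r) (by linarith : (0:ℝ) ≤ 2 - 17*r)) (by linarith : (0:ℝ) ≤ r^2 - a^2)]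
  rcases le_or_gt (1/8) r with hc2 | hc2
  · nlinarith [mul_nonneg (by linarith : (0:ℝ) ≤ r-a) (mul_nonneg (by positivity : (0:ℝ) ≤ 2*(r-1)^2) (by linarith : (0:ℝ) ≤ 8*r-1)),
      mul_nonneg (sq_nonneg (r-a)) (by linarith : (0:ℝ) ≤ 17*r-2),
      mul_nonneg hr.le (by positivity : (0:ℝ) ≤ (r-1)^4)]
  · rcases le_or_gt (8*r^3+17*r^2+6*r-1) 0 with hs | hs
    · nlinarith [mul_nonneg (by linarith : (0:ℝ) ≤ r+a) (by positivity : (0:ℝ) ≤ 4*r^5+16*r^4+24*r^3+16*r^2),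
        mul_nonneg (by linarith : (0:ℝ) ≤ r+a) (by nlinarith [mul_nonneg (by linarith : (0:ℝ) ≤ 17*r-2) (by linarith : (0:ℝ) ≤ r - a)] : (0:ℝ) ≤ (17*r-2)*(a-r) - (16*r^3+16*r-2))]
    · have hA : (0:ℝ) < 17*r-2 := by linarith
      have hΔ : (0:ℝ) ≤ 4*(17*r-2)*(4*r^5+7*r^3+2*r^2+2*r) - (16*r^3+16*r-2)^2 := by
        nlinarith [mul_nonneg hs.le (by linarith : (0:ℝ) ≤ 1-8*r), sq_nonneg (r-1/8), sq_nonneg (8*r^3+17*r^2+6*r-1), mul_nonneg (mul_nonneg hs.le hs.le) (by linarith : (0:ℝ) ≤ 1-8*r)]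
      nlinarith [sq_nonneg (2*(17*r-2)*a - (16*r^3+16*r-2)), hΔ, hA]

lemma scalar_main (r t m : ℝ) (hr : 0 < r) (ht : t^2 ≤ m) (hrm : r^2 = 1 + 2*t + m) :
    (1-r)^2 + 2*((r⁻¹-1)*t*(1+t)) + t^2 ≤ 4*m^2 := by
  have hm : m = r^2 - 1 - 2*t := by linarith
  have ha : (1+t)^2 ≤ r^2 := by nlinarith
  have hG := scalarG r (1+t) hr ha
  rw [← mul_le_mul_iff_right₀ hr]
  have hinv : r * (2*((r⁻¹-1)*t*(1+t))) = 2*t*(1-r)*(1+t) := by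
    field_simp
  have expand : r * ((1-r)^2 + 2*((r⁻¹-1)*t*(1+t)) + t^2)
      = r*(1-r)^2 + 2*t*(1-r)*(1+t) + r*t^2 := by
    rw [mul_add, mul_add, hinv]
  rw [expand, hm]
  nlinarith [hG]

lemma gbound (u v : EuclideanSpace ℝ (Fin 3)) (hu : ‖u‖ = 1) (hx : u + v ≠ 0) :
    ‖phi (u + v) - (u + v) + ⟪u, v⟫ • u‖ ≤ 2 * ‖v‖ ^ 2 := by
  set x := u + v with hxdef
  have hr : 0 < ‖x‖ := norm_pos_iff.mpr hx
  set r := ‖x‖ with hrdef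
  set t : ℝ := ⟪u, v⟫ with htdef
  have huu : ⟪u, u⟫ = 1 := by
    rw [real_inner_self_eq_norm_sq, hu]; norm_num
  have hxu : ⟪x, u⟫ = 1 + t := by
    rw [hxdef, inner_add_left, huu, real_inner_comm]
  have hr2 : r^2 = 1 + 2*t + ‖v‖^2 := by
    rw [hrdef, hxdef, norm_add_sq_real, hu]; ring
  have ht : t^2 ≤ ‖v‖^2 := by
    have h := abs_real_inner_le_norm u v
    rw [hu, one_mul] at h
    nlinarith [abs_nonneg t, sq_abs t]
  have hgeq : phi x - x + t • u = (r⁻¹ - 1) • x + t • u := by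
    unfold phi
    rw [sub_smul, one_smul]
  rw [hgeq]
  have hnormsq : ‖(r⁻¹ - 1) • x + t • u‖^2
      = (r⁻¹-1)^2 * r^2 + 2*((r⁻¹-1)*t*(1+t)) + t^2 := by
    rw [norm_add_sq_real, real_inner_smul_left, real_inner_smul_right, hxu,
      norm_smul, norm_smul, Real.norm_eq_abs, Real.norm_eq_abs, hu, mul_one,
      mul_pow, sq_abs, sq_abs]
    rw [← hrdef]
    ring
  have hsq : ‖(r⁻¹ - 1) • x + t • u‖^2 ≤ (2 * ‖v‖^2)^2 := by
    rw [hnormsq]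
    have hc : (r⁻¹-1)^2 * r^2 = (1-r)^2 := by
      field_simp
    have := scalar_main r t (‖v‖^2) hr ht hr2
    nlinarith [this]
  nlinarith [hsq, norm_nonneg ((r⁻¹ - 1) • x + t • u), sq_nonneg (‖v‖^2), norm_nonneg v]

/-- Corollary (static-weight reduction error with fully aligned directions). -/
theorem static_weight_reduction_error_aligned
    (N : ℕ) (hN : 0 < N)
    (V : Fin N → EuclideanSpace ℝ (Fin 3)) (hV : ∀ i, ‖V i‖ = 1)
    (ω : Fin N → Fin N → ℝ) (hω : ∀ i j, ω i j = 0 ∨ ω i j = 1)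
    (α : Fin N → ℝ) (hα : ∀ i, 0 ≤ α i) (hαsum : ∑ i, α i = 1)
    (w : Fin N → EuclideanSpace ℝ (Fin 3))
    (n : Fin N → ℝ) (hn : ∀ i, n i = ∑ j, ω i j)
    (O : Fin N → EuclideanSpace ℝ (Fin 3)) (hO : ∀ i, O i = ∑ j, ω i j • V j)
    (D : Fin N → EuclideanSpace ℝ (Fin 3)) (hD : ∀ i, D i = O i + w i)
    (Vα : EuclideanSpace ℝ (Fin 3)) (hVα : Vα = ∑ i, α i • V i)
    (wb : EuclideanSpace ℝ (Fin 3)) (hwb : wb = ∑ i, (α i / n i) • w i)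
    (hn0 : ∀ i, 0 < n i) (hO0 : ∀ i, O i ≠ 0) (hD0 : ∀ i, D i ≠ 0)
    (hVα0 : Vα ≠ 0) (hVαw : Vα + wb ≠ 0)
    (hθ : ∀ i j, InnerProductGeometry.angle (V i) (V j) = 0) :
    ‖(∑ i, α i • phi (D i)) - ‖Vα‖ • phi (Vα + wb)‖ ≤
      2 * (‖wb‖ ^ 2 + ∑ i, α i * ‖w i‖ ^ 2) := by
  classical
  set i0 : Fin N := ⟨0, hN⟩ with hi0
  set u := V i0 with hu
  have hu1 : ‖u‖ = 1 := hV i0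
  have hVall : ∀ i, V i = u := by
    intro i
    obtain ⟨-, c, hc, hci⟩ := InnerProductGeometry.angle_eq_zero_iff.mp (hθ i0 i)
    have hnorm : ‖V i‖ = c * ‖u‖ := by
      rw [hci, norm_smul, Real.norm_eq_abs, abs_of_pos hc]
    rw [hV i, hu1, mul_one] at hnorm
    rw [hci, ← hnorm, one_smul]
  have hn1 : ∀ i, 1 ≤ n i := by
    intro i
    have hex : ∃ j, ω i j = 1 := by
      by_contra h
      push_neg at h
      have hz : ∀ j, ω i j = 0 := fun j => (hω i j).resolve_right (h j)
      have := hn0 i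
      rw [hn i] at this
      simp [hz] at this
    obtain ⟨j, hj⟩ := hex
    rw [hn i, ← hj]
    exact Finset.single_le_sum (f := ω i)
      (fun k _ => by rcases hω i k with h | h <;> simp [h]) (Finset.mem_univ j)
  have hOi : ∀ i, O i = n i • u := by
    intro i
    rw [hO i, hn i]
    simp_rw [hVall]
    rw [← Finset.sum_smul]
  set v : Fin N → EuclideanSpace ℝ (Fin 3) := fun i => (n i)⁻¹ • w i with hv
  have hDi : ∀ i, D i = n i • (u + v i) := by
    intro i
    rw [hD i, hOi i, smul_add]
    simp [hv, smul_smul, mul_inv_cancel₀ (hn0 i).ne']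
  have hphiD : ∀ i, phi (D i) = phi (u + v i) := fun i => by
    rw [hDi i, phi_smul _ (hn0 i)]
  have huv0 : ∀ i, u + v i ≠ 0 := by
    intro i hzero
    exact hD0 i (by rw [hDi i, hzero, smul_zero])
  have hVαu : Vα = u := by
    rw [hVα]
    simp_rw [hVall]
    rw [← Finset.sum_smul, hαsum, one_smul]
  have hVαn : ‖Vα‖ = 1 := by rw [hVαu, hu1]
  have hwb' : wb = ∑ i, α i • v i := by
    rw [hwb]
    refine Finset.sum_congr rfl fun i _ => ?_
    rw [hv]
    rw [smul_smul, div_eq_mul_inv]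
  set T : ℝ := ⟪u, wb⟫ with hT
  have hTsum : T = ∑ i, α i * ⟪u, v i⟫ := by
    rw [hT, hwb', inner_sum]
    exact Finset.sum_congr rfl fun i _ => real_inner_smul_right u (v i) (α i)
  have h1 : (∑ i, α i • u) + (∑ i, α i • v i) = u + wb := by
    rw [← Finset.sum_smul, hαsum, one_smul, ← hwb']
  have h2 : ∑ i, α i • ((⟪u, v i⟫ : ℝ) • u) = T • u := by
    simp_rw [smul_smul]
    rw [← Finset.sum_smul, ← hTsum]
  have hkey : (∑ i, α i • phi (D i)) - ‖Vα‖ • phi (Vα + wb)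
      = (∑ i, α i • (phi (u + v i) - (u + v i) + (⟪u, v i⟫ : ℝ) • u))
        - (phi (u + wb) - (u + wb) + T • u) := by
    rw [hVαn, one_smul, hVαu]
    simp only [smul_sub, smul_add, Finset.sum_sub_distrib, Finset.sum_add_distrib]
    rw [h1, h2]
    simp_rw [hphiD]
    abel
  rw [hkey]
  have hwb0 : u + wb ≠ 0 := by rw [← hVαu]; exact hVαw
  have hgwb := gbound u wb hu1 hwb0
  have hsum : ‖∑ i, α i • (phi (u + v i) - (u + v i) + (⟪u, v i⟫ : ℝ) • u)‖
      ≤ ∑ i, α i * (2 * ‖v i‖ ^ 2) := by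
    refine (norm_sum_le _ _).trans (Finset.sum_le_sum fun i _ => ?_)
    rw [norm_smul, Real.norm_eq_abs, abs_of_nonneg (hα i)]
    exact mul_le_mul_of_nonneg_left (gbound u (v i) hu1 (huv0 i)) (hα i)
  have hvw : ∀ i, ‖v i‖ ^ 2 ≤ ‖w i‖ ^ 2 := by
    intro i
    have hle : ‖v i‖ ≤ ‖w i‖ := by
      rw [hv]
      simp only [norm_smul, Real.norm_eq_abs, abs_of_pos (inv_pos.mpr (hn0 i))]
      calc (n i)⁻¹ * ‖w i‖ ≤ 1 * ‖w i‖ := by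
            apply mul_le_mul_of_nonneg_right _ (norm_nonneg _)
            rw [inv_le_one_iff₀]
            right; exact hn1 i
        _ = ‖w i‖ := one_mul _
    exact pow_le_pow_left₀ (norm_nonneg _) hle 2
  have hsum2 : ∑ i, α i * (2 * ‖v i‖ ^ 2) ≤ 2 * ∑ i, α i * ‖w i‖ ^ 2 := by
    rw [Finset.mul_sum]
    refine Finset.sum_le_sum fun i _ => ?_
    have := mul_le_mul_of_nonneg_left (hvw i) (hα i)
    nlinarith [this]
  calc ‖(∑ i, α i • (phi (u + v i) - (u + v i) + (⟪u, v i⟫ : ℝ) • u))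
        - (phi (u + wb) - (u + wb) + T • u)‖
      ≤ ‖∑ i, α i • (phi (u + v i) - (u + v i) + (⟪u, v i⟫ : ℝ) • u)‖
        + ‖phi (u + wb) - (u + wb) + T • u‖ := norm_sub_le _ _
    _ ≤ (∑ i, α i * (2 * ‖v i‖ ^ 2)) + 2 * ‖wb‖ ^ 2 := add_le_add hsum hgwb
    _ ≤ 2 * (‖wb‖ ^ 2 + ∑ i, α i * ‖w i‖ ^ 2) := by
        rw [mul_add]
        exact add_le_add_left hsum2 _ |>.trans_eq (add_comm _ _)
end

section
/- Assume n_i > 0 and O_i ≠ 0 for all i = 1,…,N, assume D_i = O_i + w_i ≠ 0 for all i, assume ⟨V⟩_α ≠ 0 and ⟨V⟩_α + w ≠ 0, and assume that α is a normalized eigenvector centrality of the orientation network, i.e. α_j = Σ_{i=1}^N α_i ω_{ij}/n_i for every j = 1,…,N. Then the residual vector ε_α = ⟨φ(D)⟩_α − ‖⟨V⟩_α‖ · φ(⟨V⟩_α + w) satisfies ‖ε_α‖ ≤ 2‖w‖²/‖⟨V⟩_α‖ + Σ_{i=1}^N α_i π̃_i + 2 Σ_{i=1}^N α_i ρ_i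 (π̃_α + ρ_i + 2π̃_i + √(Q_{i,n_iα})). -/
open Finset
open scoped BigOperators RealInnerProductSpace

lemma norm_phi (x : EuclideanSpace ℝ (Fin 3)) (hx : x ≠ 0) : ‖phi x‖ = 1 := by
  simp [phi, norm_smul, norm_ne_zero_iff.2 hx, inv_mul_cancel₀]

lemma smul_norm_phi (x : EuclideanSpace ℝ (Fin 3)) (hx : x ≠ 0) : ‖x‖ • phi x = x := by
  simp [phi, smul_smul, mul_inv_cancel₀ (norm_ne_zero_iff.2 hx)]

lemma phi_smul_pos (c : ℝ) (hc : 0 < c) (x : EuclideanSpace ℝ (Fin 3)) (hx : x ≠ 0) :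
    phi (c • x) = phi x := by
  simp only [phi, norm_smul, Real.norm_eq_abs, abs_of_pos hc, mul_inv, smul_smul]
  rw [mul_comm c⁻¹ ‖x‖⁻¹, mul_assoc, inv_mul_cancel₀ hc.ne', mul_one]

lemma key_scalar (A B : ℝ) (hB : 0 ≤ B) (hB2 : B ≤ 2*(A+1)) :
    B*(2*A^2 - A*B + B) ≤ 4*(A+1)*(A^2+2*B)^2 := by
  nlinarith [sq_nonneg (A^2+2*B), sq_nonneg A, mul_nonneg hB (sq_nonneg A), mul_nonneg hB hB,
    mul_nonneg (mul_nonneg hB hB) hB, sq_nonneg (A+1), mul_nonneg (sub_nonneg.2 hB2) (sq_nonneg A),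
    mul_nonneg (sub_nonneg.2 hB2) hB, mul_nonneg (mul_nonneg (sub_nonneg.2 hB2) hB) hB]

/-- Second-order normalization bound, unit-vector case. -/
lemma key_unit (x h : EuclideanSpace ℝ (Fin 3)) (hx : ‖x‖ = 1) (hu : x + h ≠ 0) :
    ‖phi (x + h) - (x + h) + ⟪x, h⟫ • x‖ ≤ 2 * ‖h‖^2 := by
  set u := x + h with hudef
  set r := ‖u‖ with hrdef
  have hr : 0 < r := norm_pos_iff.2 hu
  set p : ℝ := ⟪x, u⟫ with hpdef
  have habs := abs_real_inner_le_norm x u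
  rw [hx, one_mul, ← hpdef, ← hrdef] at habs
  obtain ⟨hpr', hpr⟩ := abs_le.1 habs
  have hch : ⟪x, h⟫ = p - 1 := by
    have h1 : ⟪x, u⟫ = ⟪x, x⟫ + ⟪x, h⟫ := by rw [hudef, inner_add_right]
    rw [← hpdef, real_inner_self_eq_norm_sq, hx, one_pow] at h1
    linarith
  have hs : ‖h‖^2 = r^2 - 2*p + 1 := by
    have hh : h = u - x := by rw [hudef]; abel
    rw [hh, norm_sub_sq_real, real_inner_comm x u, ← hpdef, ← hrdef, hx]
    ring
  have hE : phi u - u + ⟪x, h⟫ • x = (r⁻¹ - 1) • u + (p-1) • x := by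
    rw [hch, phi, ← hrdef]
    module
  rw [hE]
  have hnormsq : ‖(r⁻¹ - 1) • u + (p-1) • x‖^2
      = (r⁻¹-1)^2 * r^2 + 2*((r⁻¹-1)*(p-1))*p + (p-1)^2 := by
    rw [norm_add_sq_real, real_inner_smul_left, real_inner_smul_right, norm_smul, norm_smul,
      real_inner_comm x u, ← hpdef, hx, ← hrdef]
    simp only [Real.norm_eq_abs, mul_pow, sq_abs, mul_one]
    ring
  have hA : (r⁻¹-1)^2 * r^2 + 2*((r⁻¹-1)*(p-1))*p + (p-1)^2 ≤ (2*‖h‖^2)^2 := by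
    have hkey := key_scalar (r-1) (r-p) (by linarith) (by linarith)
    have hexp : ((r⁻¹-1)^2 * r^2 + 2*((r⁻¹-1)*(p-1))*p + (p-1)^2) * r
        = (r-p)*(2*(r-1)^2 - (r-1)*(r-p) + (r-p)) := by
      field_simp
      ring
    have hs2 : (2*‖h‖^2)^2 * r = (4*((r-1)+1)*(((r-1))^2+2*(r-p))^2) := by
      rw [hs]; ring
    rw [← mul_le_mul_iff_of_pos_right hr, hexp, hs2]
    exact hkey
  have h2s : (0:ℝ) ≤ 2*‖h‖^2 := by positivity
  nlinarith [norm_nonneg ((r⁻¹ - 1) • u + (p-1) • x)]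

/-- Second-order normalization bound, general case. -/
lemma key_gen (x h : EuclideanSpace ℝ (Fin 3)) (hx : x ≠ 0) (hu : x + h ≠ 0) :
    ‖phi (x + h) - phi x - ‖x‖⁻¹ • (h - ⟪phi x, h⟫ • phi x)‖ ≤ 2 * ‖h‖^2 / ‖x‖^2 := by
  have ha : (0:ℝ) < ‖x‖ := norm_pos_iff.2 hx
  set a : ℝ := ‖x‖ with hadef
  have hx' : ‖a⁻¹ • x‖ = 1 := by
    rw [norm_smul, Real.norm_eq_abs, abs_of_pos (inv_pos.2 ha), inv_mul_cancel₀ ha.ne']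
  have hsum : a⁻¹ • x + a⁻¹ • h = a⁻¹ • (x + h) := (smul_add _ _ _).symm
  have hu' : a⁻¹ • x + a⁻¹ • h ≠ 0 := by
    rw [hsum]; exact smul_ne_zero (inv_ne_zero ha.ne') hu
  have h1 := key_unit (a⁻¹ • x) (a⁻¹ • h) hx' hu'
  rw [hsum, phi_smul_pos a⁻¹ (inv_pos.2 ha) _ hu] at h1
  have hphix : phi x = a⁻¹ • x := rfl
  have e2 : phi (x + h) - a⁻¹ • (x + h) + ⟪a⁻¹ • x, a⁻¹ • h⟫ • (a⁻¹ • x)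
      = phi (x + h) - phi x - a⁻¹ • (h - ⟪phi x, h⟫ • phi x) := by
    rw [hphix]
    simp only [real_inner_smul_left, real_inner_smul_right]
    module
  rw [e2] at h1
  have e3 : 2 * ‖a⁻¹ • h‖^2 = 2 * ‖h‖^2 / a^2 := by
    rw [norm_smul, Real.norm_eq_abs, abs_of_pos (inv_pos.2 ha)]
    field_simp
  rw [e3] at h1
  exact h1

lemma proj_diff (a b v : EuclideanSpace ℝ (Fin 3)) (ha : ‖a‖ = 1) (hb : ‖b‖ = 1) :
    ‖⟪a, v⟫ • a - ⟪b, v⟫ • b‖ ≤ 2 * ‖a - b‖ * ‖v‖ := by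
  have hid : ⟪a, v⟫ • a - ⟪b, v⟫ • b = ⟪a - b, v⟫ • a + ⟪b, v⟫ • (a - b) := by
    rw [inner_sub_left]; module
  rw [hid]
  calc ‖⟪a - b, v⟫ • a + ⟪b, v⟫ • (a - b)‖ ≤ ‖⟪a - b, v⟫ • a‖ + ‖⟪b, v⟫ • (a - b)‖ :=
        norm_add_le _ _
  _ = |⟪a - b, v⟫| * 1 + |⟪b, v⟫| * ‖a - b‖ := by
        rw [norm_smul, norm_smul, ha, Real.norm_eq_abs, Real.norm_eq_abs]
  _ ≤ (‖a - b‖ * ‖v‖) * 1 + (‖b‖ * ‖v‖) * ‖a - b‖ := by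
      gcongr
      · exact abs_real_inner_le_norm _ _
      · exact abs_real_inner_le_norm _ _
  _ = 2 * ‖a - b‖ * ‖v‖ := by rw [hb]; ring

set_option maxHeartbeats 2000000 in
/-- Theorem (dynamic-weight reduction error bound with normalized eigenvector
centrality, Theorem 2 of the paper). -/
theorem dynamic_weight_reduction_error
    (N : ℕ) (hN : 0 < N)
    (V : Fin N → EuclideanSpace ℝ (Fin 3)) (hV : ∀ i, ‖V i‖ = 1)
    (ω : Fin N → Fin N → ℝ) (hω : ∀ i j, ω i j = 0 ∨ ω i j = 1)
    (α : Fin N → ℝ) (hα : ∀ i, 0 ≤ α i) (hαsum : ∑ i, α i = 1)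
    (w : Fin N → EuclideanSpace ℝ (Fin 3))
    (n : Fin N → ℝ) (hn : ∀ i, n i = ∑ j, ω i j)
    (O : Fin N → EuclideanSpace ℝ (Fin 3)) (hO : ∀ i, O i = ∑ j, ω i j • V j)
    (D : Fin N → EuclideanSpace ℝ (Fin 3)) (hD : ∀ i, D i = O i + w i)
    (Vα : EuclideanSpace ℝ (Fin 3)) (hVα : Vα = ∑ i, α i • V i)
    (wb : EuclideanSpace ℝ (Fin 3)) (hwb : wb = ∑ i, (α i / n i) • w i)
    (Q : Fin N → ℝ)
    (hQ : ∀ i, Q i = (1 / n i ^ 2) *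
      ∑ j, ∑ j', |ω i j - n i * α j| * |ω i j' - n i * α j'| *
        InnerProductGeometry.angle (V j) (V j') ^ 2 / 2)
    (hn0 : ∀ i, 0 < n i) (hO0 : ∀ i, O i ≠ 0) (hD0 : ∀ i, D i ≠ 0)
    (hVα0 : Vα ≠ 0) (hVαw : Vα + wb ≠ 0)
    (hEig : ∀ j, α j = ∑ i, α i * ω i j / n i) :
    ‖(∑ i, α i • phi (D i)) - ‖Vα‖ • phi (Vα + wb)‖ ≤
      2 * ‖wb‖ ^ 2 / ‖Vα‖
      + ∑ i, α i * (1 - ‖O i‖ / n i)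
      + 2 * ∑ i, α i * (‖w i‖ / ‖O i‖) *
          ((1 - ‖Vα‖) + ‖w i‖ / ‖O i‖ + 2 * (1 - ‖O i‖ / n i) + Real.sqrt (Q i)) := by
  have hωn : ∀ i j, 0 ≤ ω i j := by
    intro i j; rcases hω i j with h | h <;> rw [h] <;> norm_num
  have hOn : ∀ i, ‖O i‖ ≤ n i := by
    intro i
    rw [hO, hn]
    calc ‖∑ j, ω i j • V j‖ ≤ ∑ j, ‖ω i j • V j‖ := norm_sum_le _ _
    _ = ∑ j, ω i j := by
        refine sum_congr rfl fun j _ => ?_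
        rw [norm_smul, hV, Real.norm_eq_abs, abs_of_nonneg (hωn i j), mul_one]
  have hVα1 : ‖Vα‖ ≤ 1 := by
    rw [hVα, ← hαsum]
    calc ‖∑ i, α i • V i‖ ≤ ∑ i, ‖α i • V i‖ := norm_sum_le _ _
    _ = ∑ i, α i := by
        refine sum_congr rfl fun i _ => ?_
        rw [norm_smul, hV, Real.norm_eq_abs, abs_of_nonneg (hα i), mul_one]
  have hVαpos : (0:ℝ) < ‖Vα‖ := norm_pos_iff.2 hVα0
  have hOpos : ∀ i, (0:ℝ) < ‖O i‖ := fun i => norm_pos_iff.2 (hO0 i)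
  -- eigenvector identity
  have hsumO : ∑ i, (α i * (n i)⁻¹) • O i = Vα := by
    rw [hVα]
    calc ∑ i, (α i * (n i)⁻¹) • O i = ∑ i, ∑ j, (α i * ω i j / n i) • V j := by
          refine sum_congr rfl fun i _ => ?_
          rw [hO, smul_sum]
          refine sum_congr rfl fun j _ => ?_
          rw [smul_smul]
          congr 1
          field_simp
    _ = ∑ j, ∑ i, (α i * ω i j / n i) • V j := sum_comm
    _ = ∑ j, α j • V j := by
          refine sum_congr rfl fun j _ => ?_
          rw [← sum_smul, ← hEig j]
  -- Q bound
  have hQb : ∀ i, ‖(n i)⁻¹ • O i - Vα‖ ≤ Real.sqrt (Q i) := by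
    intro i
    set c : Fin N → ℝ := fun j => ω i j / n i - α j with hc
    have hc0 : ∑ j, c j = 0 := by
      simp only [hc]
      rw [sum_sub_distrib, ← sum_div, ← hn, div_self (hn0 i).ne', hαsum, sub_self]
    have hvec : (n i)⁻¹ • O i - Vα = ∑ j, c j • V j := by
      rw [hO, hVα, smul_sum, ← sum_sub_distrib]
      refine sum_congr rfl fun j _ => ?_
      rw [smul_smul, ← sub_smul]
      congr 1
      simp only [hc]
      ring
    have hnormsq : ‖∑ j, c j • V j‖^2 = ∑ j, ∑ j', c j * c j' * ⟪V j, V j'⟫ := by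
      rw [← real_inner_self_eq_norm_sq, sum_inner]
      refine sum_congr rfl fun j _ => ?_
      rw [inner_sum]
      refine sum_congr rfl fun j' _ => ?_
      rw [real_inner_smul_left, real_inner_smul_right]
      ring
    have hsplit : ∀ j j', c j * c j' * ⟪V j, V j'⟫
        = c j * c j' * (⟪V j, V j'⟫ - 1) + c j * c j' := fun j j' => by ring
    have hbd : ∀ j j', c j * c j' * (⟪V j, V j'⟫ - 1)
        ≤ |c j| * |c j'| * InnerProductGeometry.angle (V j) (V j') ^ 2 / 2 := by
      intro j j'
      have hcos : ⟪V j, V j'⟫ = Real.cos (InnerProductGeometry.angle (V j) (V j')) := by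
        rw [InnerProductGeometry.cos_angle, hV, hV, mul_one, div_one]
      have hc1 : Real.cos (InnerProductGeometry.angle (V j) (V j')) ≤ 1 := Real.cos_le_one _
      have hc2 := Real.one_sub_sq_div_two_le_cos
        (x := InnerProductGeometry.angle (V j) (V j'))
      calc c j * c j' * (⟪V j, V j'⟫ - 1) ≤ |c j * c j' * (⟪V j, V j'⟫ - 1)| := le_abs_self _
      _ = |c j| * |c j'| * |⟪V j, V j'⟫ - 1| := by rw [abs_mul, abs_mul]
      _ ≤ |c j| * |c j'| * (InnerProductGeometry.angle (V j) (V j') ^ 2 / 2) := by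
          gcongr
          rw [hcos, abs_sub_comm, abs_of_nonneg (by linarith)]
          linarith
      _ = |c j| * |c j'| * InnerProductGeometry.angle (V j) (V j') ^ 2 / 2 := by ring
    have hQnn : 0 ≤ Q i := by
      rw [hQ]
      apply mul_nonneg (by positivity)
      apply sum_nonneg; intro j _; apply sum_nonneg; intro j' _
      positivity
    rw [hvec]
    rw [show Real.sqrt (Q i) = Real.sqrt (Q i) from rfl]
    have hsq : ‖∑ j, c j • V j‖^2 ≤ Q i := by
      rw [hnormsq]
      have hQi : Q i = ∑ j, ∑ j', |c j| * |c j'|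
          * InnerProductGeometry.angle (V j) (V j') ^ 2 / 2 := by
        rw [hQ, mul_sum]
        refine sum_congr rfl fun j _ => ?_
        rw [mul_sum]
        refine sum_congr rfl fun j' _ => ?_
        have hcj : |c j| = |ω i j - n i * α j| / n i := by
          have h' : c j = (ω i j - n i * α j) / n i := by
            show ω i j / n i - α j = _
            rw [sub_div, mul_div_cancel_left₀ _ (hn0 i).ne']
          rw [h', abs_div, abs_of_pos (hn0 i)]
        have hcj' : |c j'| = |ω i j' - n i * α j'| / n i := by
          have h' : c j' = (ω i j' - n i * α j') / n i := by
            show ω i j' / n i - α j' = _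
            rw [sub_div, mul_div_cancel_left₀ _ (hn0 i).ne']
          rw [h', abs_div, abs_of_pos (hn0 i)]
        rw [hcj, hcj']
        field_simp
      rw [hQi]
      have hdouble : ∑ j, ∑ j', c j * c j' * ⟪V j, V j'⟫
          = (∑ j, ∑ j', c j * c j' * (⟪V j, V j'⟫ - 1)) + (∑ j, c j) * (∑ j', c j') := by
        rw [sum_mul_sum, ← sum_add_distrib]
        refine sum_congr rfl fun j _ => ?_
        rw [← sum_add_distrib]
        refine sum_congr rfl fun j' _ => ?_
        ring
      rw [hdouble, hc0, zero_mul, add_zero]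
      exact sum_le_sum fun j _ => sum_le_sum fun j' _ => hbd j j'
    have := Real.sqrt_le_sqrt hsq
    rwa [Real.sqrt_sq (norm_nonneg _)] at this
  -- abbreviations
  set Φ := phi Vα with hΦ
  have hΦ1 : ‖Φ‖ = 1 := norm_phi _ hVα0
  have hφO1 : ∀ i, ‖phi (O i)‖ = 1 := fun i => norm_phi _ (hO0 i)
  -- error terms
  set E1 : Fin N → EuclideanSpace ℝ (Fin 3) := fun i =>
    phi (D i) - phi (O i) - ‖O i‖⁻¹ • (w i - ⟪phi (O i), w i⟫ • phi (O i)) with hE1def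
  set E2 : Fin N → EuclideanSpace ℝ (Fin 3) := fun i =>
    phi (O i) - (n i)⁻¹ • O i with hE2def
  set H : Fin N → EuclideanSpace ℝ (Fin 3) := fun i =>
    ‖O i‖⁻¹ • (w i - ⟪phi (O i), w i⟫ • phi (O i))
      - (n i)⁻¹ • (w i - ⟪Φ, w i⟫ • Φ) with hHdef
  set E3 : EuclideanSpace ℝ (Fin 3) :=
    phi (Vα + wb) - Φ - ‖Vα‖⁻¹ • (wb - ⟪Φ, wb⟫ • Φ) with hE3def
  -- the master identity
  have hid : (∑ i, α i • phi (D i)) - ‖Vα‖ • phi (Vα + wb)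
      = (∑ i, α i • (E1 i + E2 i + H i)) - ‖Vα‖ • E3 := by
    have htel : ∀ i, E1 i + E2 i + H i
        = phi (D i) - (n i)⁻¹ • O i - (n i)⁻¹ • (w i - ⟪Φ, w i⟫ • Φ) := by
      intro i
      simp only [hE1def, hE2def, hHdef]
      module
    have hsum2 : ∑ i, α i • (E1 i + E2 i + H i)
        = (∑ i, α i • phi (D i)) - Vα - (wb - ⟪Φ, wb⟫ • Φ) := by
      have h1 : ∑ i, α i • (E1 i + E2 i + H i)
          = (∑ i, α i • phi (D i)) - (∑ i, (α i * (n i)⁻¹) • O i)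
            - ((∑ i, (α i * (n i)⁻¹) • w i) - (∑ i, (α i * (n i)⁻¹ * ⟪Φ, w i⟫)) • Φ) := by
        rw [← sum_sub_distrib, sum_smul, ← sum_sub_distrib, ← sum_sub_distrib]
        refine sum_congr rfl fun i _ => ?_
        rw [htel i]
        module
      rw [h1, hsumO]
      have hwb2 : ∑ i, (α i * (n i)⁻¹) • w i = wb := by
        rw [hwb]
        refine sum_congr rfl fun i _ => ?_
        rw [div_eq_mul_inv]
      have hinner : ∑ i, (α i * (n i)⁻¹ * ⟪Φ, w i⟫) = ⟪Φ, wb⟫ := by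
        rw [hwb, inner_sum]
        refine sum_congr rfl fun i _ => ?_
        rw [real_inner_smul_right, div_eq_mul_inv]
      rw [hwb2, hinner]
    have hE3s : ‖Vα‖ • E3 = ‖Vα‖ • phi (Vα + wb) - Vα - (wb - ⟪Φ, wb⟫ • Φ) := by
      rw [hE3def, smul_sub, smul_sub, smul_smul, mul_inv_cancel₀ hVαpos.ne', one_smul,
        hΦ, smul_norm_phi _ hVα0]
    rw [hsum2, hE3s]
    abel
  rw [hid]
  -- norm bounds on the pieces
  have hE1b : ∀ i, ‖E1 i‖ ≤ 2 * (‖w i‖ / ‖O i‖) * (‖w i‖ / ‖O i‖) := by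
    intro i
    have := key_gen (O i) (w i) (hO0 i) (by rw [← hD i]; exact hD0 i)
    rw [← hD i] at this
    calc ‖E1 i‖ ≤ 2 * ‖w i‖^2 / ‖O i‖^2 := this
    _ = 2 * (‖w i‖ / ‖O i‖) * (‖w i‖ / ‖O i‖) := by
        field_simp
  have hE2b : ∀ i, ‖E2 i‖ ≤ 1 - ‖O i‖ / n i := by
    intro i
    have h1 : E2 i = (‖O i‖⁻¹ - (n i)⁻¹) • O i := by
      rw [hE2def]
      simp only [phi]
      rw [sub_smul]
    rw [h1, norm_smul, Real.norm_eq_abs]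
    have hle : (n i)⁻¹ ≤ ‖O i‖⁻¹ := by
      apply inv_anti₀ (hOpos i) (hOn i)
    rw [abs_of_nonneg (by linarith)]
    rw [sub_mul, inv_mul_cancel₀ (hOpos i).ne']
    rw [inv_mul_eq_div]
  have hπtα : (0:ℝ) ≤ 1 - ‖Vα‖ := by linarith
  have hπt : ∀ i, (0:ℝ) ≤ 1 - ‖O i‖ / n i := by
    intro i
    have := (div_le_one (hn0 i)).2 (hOn i)
    linarith
  have hphidiff : ∀ i, ‖phi (O i) - Φ‖
      ≤ (1 - ‖O i‖ / n i) + Real.sqrt (Q i) + (1 - ‖Vα‖) := by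
    intro i
    have hVαΦ : ‖Vα - Φ‖ = 1 - ‖Vα‖ := by
      have h1 : Vα - Φ = (1 - ‖Vα‖⁻¹) • Vα := by
        rw [hΦ]; simp only [phi]; rw [sub_smul, one_smul]
      rw [h1, norm_smul, Real.norm_eq_abs]
      have h2 : ‖Vα‖⁻¹ ≥ 1 := by
        rw [ge_iff_le, le_inv_comm₀ one_pos hVαpos]
        simpa using hVα1
      rw [abs_of_nonpos (by linarith), neg_sub, sub_mul, one_mul,
        inv_mul_cancel₀ hVαpos.ne']
    calc ‖phi (O i) - Φ‖
        = ‖(phi (O i) - (n i)⁻¹ • O i) + ((n i)⁻¹ • O i - Vα) + (Vα - Φ)‖ := by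
          congr 1; abel
    _ ≤ ‖phi (O i) - (n i)⁻¹ • O i‖ + ‖(n i)⁻¹ • O i - Vα‖ + ‖Vα - Φ‖ :=
          norm_add₃_le
    _ ≤ (1 - ‖O i‖ / n i) + Real.sqrt (Q i) + (1 - ‖Vα‖) := by
          gcongr
          · exact hE2b i
          · exact hQb i
          · exact le_of_eq hVαΦ
  have hHb : ∀ i, ‖H i‖ ≤ (‖w i‖ / ‖O i‖) *
      (2 * (1 - ‖O i‖ / n i) + 2 * ((1 - ‖O i‖ / n i) + Real.sqrt (Q i) + (1 - ‖Vα‖))) := by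
    intro i
    have hsplit : H i = (‖O i‖⁻¹ - (n i)⁻¹) • w i
        - ‖O i‖⁻¹ • (⟪phi (O i), w i⟫ • phi (O i) - ⟪Φ, w i⟫ • Φ)
        - (‖O i‖⁻¹ - (n i)⁻¹) • (⟪Φ, w i⟫ • Φ) := by
      rw [hHdef]
      module
    have hle : (n i)⁻¹ ≤ ‖O i‖⁻¹ := inv_anti₀ (hOpos i) (hOn i)
    have hdiff : (‖O i‖⁻¹ - (n i)⁻¹) * ‖w i‖ = (1 - ‖O i‖ / n i) * (‖w i‖ / ‖O i‖) := by
      have hO' := (hOpos i).ne'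
      have hn' := (hn0 i).ne'
      field_simp
    have h1 : ‖(‖O i‖⁻¹ - (n i)⁻¹) • w i‖ = (1 - ‖O i‖ / n i) * (‖w i‖ / ‖O i‖) := by
      rw [norm_smul, Real.norm_eq_abs, abs_of_nonneg (by linarith), hdiff]
    have h3 : ‖(‖O i‖⁻¹ - (n i)⁻¹) • (⟪Φ, w i⟫ • Φ)‖
        ≤ (1 - ‖O i‖ / n i) * (‖w i‖ / ‖O i‖) := by
      rw [norm_smul, Real.norm_eq_abs, abs_of_nonneg (by linarith)]
      rw [norm_smul, Real.norm_eq_abs, hΦ1, mul_one]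
      calc (‖O i‖⁻¹ - (n i)⁻¹) * |⟪Φ, w i⟫|
          ≤ (‖O i‖⁻¹ - (n i)⁻¹) * (‖Φ‖ * ‖w i‖) := by
            gcongr
            · exact abs_real_inner_le_norm _ _
      _ = (1 - ‖O i‖ / n i) * (‖w i‖ / ‖O i‖) := by rw [hΦ1, one_mul, hdiff]
    have h2 : ‖‖O i‖⁻¹ • (⟪phi (O i), w i⟫ • phi (O i) - ⟪Φ, w i⟫ • Φ)‖
        ≤ (‖w i‖ / ‖O i‖) * (2 * ((1 - ‖O i‖ / n i) + Real.sqrt (Q i) + (1 - ‖Vα‖))) := by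
      rw [norm_smul, Real.norm_eq_abs, abs_of_pos (inv_pos.2 (hOpos i))]
      calc ‖O i‖⁻¹ * ‖⟪phi (O i), w i⟫ • phi (O i) - ⟪Φ, w i⟫ • Φ‖
          ≤ ‖O i‖⁻¹ * (2 * ‖phi (O i) - Φ‖ * ‖w i‖) := by
            gcongr
            exact proj_diff _ _ _ (hφO1 i) hΦ1
      _ ≤ ‖O i‖⁻¹ * (2 * ((1 - ‖O i‖ / n i) + Real.sqrt (Q i) + (1 - ‖Vα‖)) * ‖w i‖) := by
            gcongr
            exact hphidiff i
      _ = (‖w i‖ / ‖O i‖) * (2 * ((1 - ‖O i‖ / n i) + Real.sqrt (Q i) + (1 - ‖Vα‖))) := by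
            field_simp
    calc ‖H i‖ ≤ ‖(‖O i‖⁻¹ - (n i)⁻¹) • w i‖
        + ‖‖O i‖⁻¹ • (⟪phi (O i), w i⟫ • phi (O i) - ⟪Φ, w i⟫ • Φ)‖
        + ‖(‖O i‖⁻¹ - (n i)⁻¹) • (⟪Φ, w i⟫ • Φ)‖ := by
          rw [hsplit]
          refine le_trans (norm_sub_le _ _) ?_
          gcongr
          exact norm_sub_le _ _
    _ ≤ (1 - ‖O i‖ / n i) * (‖w i‖ / ‖O i‖)
        + (‖w i‖ / ‖O i‖) * (2 * ((1 - ‖O i‖ / n i) + Real.sqrt (Q i) + (1 - ‖Vα‖)))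
        + (1 - ‖O i‖ / n i) * (‖w i‖ / ‖O i‖) := by
          exact add_le_add (add_le_add (le_of_eq h1) h2) h3
    _ = (‖w i‖ / ‖O i‖) *
        (2 * (1 - ‖O i‖ / n i) + 2 * ((1 - ‖O i‖ / n i) + Real.sqrt (Q i) + (1 - ‖Vα‖))) := by
          ring
  have hE3b : ‖‖Vα‖ • E3‖ ≤ 2 * ‖wb‖^2 / ‖Vα‖ := by
    rw [norm_smul, Real.norm_eq_abs, abs_of_pos hVαpos]
    have := key_gen Vα wb hVα0 hVαw
    calc ‖Vα‖ * ‖E3‖ ≤ ‖Vα‖ * (2 * ‖wb‖^2 / ‖Vα‖^2) := by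
          gcongr
    _ = 2 * ‖wb‖^2 / ‖Vα‖ := by
          field_simp
  -- combine
  have hQnn' : ∀ i, 0 ≤ Real.sqrt (Q i) := fun i => Real.sqrt_nonneg _
  have hρnn : ∀ i, (0:ℝ) ≤ ‖w i‖ / ‖O i‖ := fun i => by positivity
  have hper : ∀ i, ‖α i • (E1 i + E2 i + H i)‖
      ≤ α i * (1 - ‖O i‖ / n i)
        + 2 * (α i * (‖w i‖ / ‖O i‖) *
          ((1 - ‖Vα‖) + ‖w i‖ / ‖O i‖ + 2 * (1 - ‖O i‖ / n i) + Real.sqrt (Q i))) := by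
    intro i
    rw [norm_smul, Real.norm_eq_abs, abs_of_nonneg (hα i)]
    have hbound : ‖E1 i + E2 i + H i‖
        ≤ (1 - ‖O i‖ / n i)
          + 2 * ((‖w i‖ / ‖O i‖) *
            ((1 - ‖Vα‖) + ‖w i‖ / ‖O i‖ + 2 * (1 - ‖O i‖ / n i) + Real.sqrt (Q i))) := by
      calc ‖E1 i + E2 i + H i‖ ≤ ‖E1 i‖ + ‖E2 i‖ + ‖H i‖ := norm_add₃_le
      _ ≤ (2 * (‖w i‖ / ‖O i‖) * (‖w i‖ / ‖O i‖)) + (1 - ‖O i‖ / n i)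
          + ((‖w i‖ / ‖O i‖) *
            (2 * (1 - ‖O i‖ / n i) + 2 * ((1 - ‖O i‖ / n i) + Real.sqrt (Q i) + (1 - ‖Vα‖)))) := by
            gcongr
            · exact hE1b i
            · exact hE2b i
            · exact hHb i
      _ = (1 - ‖O i‖ / n i)
          + 2 * ((‖w i‖ / ‖O i‖) *
            ((1 - ‖Vα‖) + ‖w i‖ / ‖O i‖ + 2 * (1 - ‖O i‖ / n i) + Real.sqrt (Q i))) := by
            ring
    calc α i * ‖E1 i + E2 i + H i‖
        ≤ α i * ((1 - ‖O i‖ / n i)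
          + 2 * ((‖w i‖ / ‖O i‖) *
            ((1 - ‖Vα‖) + ‖w i‖ / ‖O i‖ + 2 * (1 - ‖O i‖ / n i) + Real.sqrt (Q i)))) := by
          exact mul_le_mul_of_nonneg_left hbound (hα i)
    _ = α i * (1 - ‖O i‖ / n i)
        + 2 * (α i * (‖w i‖ / ‖O i‖) *
          ((1 - ‖Vα‖) + ‖w i‖ / ‖O i‖ + 2 * (1 - ‖O i‖ / n i) + Real.sqrt (Q i))) := by
          ring
  calc ‖(∑ i, α i • (E1 i + E2 i + H i)) - ‖Vα‖ • E3‖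
      ≤ ‖∑ i, α i • (E1 i + E2 i + H i)‖ + ‖‖Vα‖ • E3‖ := norm_sub_le _ _
  _ ≤ (∑ i, ‖α i • (E1 i + E2 i + H i)‖) + (2 * ‖wb‖^2 / ‖Vα‖) := by
      exact add_le_add (norm_sum_le _ _) hE3b
  _ ≤ (∑ i, (α i * (1 - ‖O i‖ / n i)
        + 2 * (α i * (‖w i‖ / ‖O i‖) *
          ((1 - ‖Vα‖) + ‖w i‖ / ‖O i‖ + 2 * (1 - ‖O i‖ / n i) + Real.sqrt (Q i)))))
      + (2 * ‖wb‖^2 / ‖Vα‖) := by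
      exact add_le_add (sum_le_sum fun i _ => hper i) le_rfl
  _ = 2 * ‖wb‖ ^ 2 / ‖Vα‖
      + ∑ i, α i * (1 - ‖O i‖ / n i)
      + 2 * ∑ i, α i * (‖w i‖ / ‖O i‖) *
          ((1 - ‖Vα‖) + ‖w i‖ / ‖O i‖ + 2 * (1 - ‖O i‖ / n i) + Real.sqrt (Q i)) := by
      rw [sum_add_distrib, ← mul_sum]
      ring
end

section
/- Assume n_i > 0 and O_i ≠ 0 for all i = 1,…,N, assume ⟨V⟩_α ≠ 0, assume w_i = 0 for all i = 1,…,N, and assume that α is a normalized eigenvector centrality of the orientation network, i.e. α_j = Σ_{i=1}^N α_i ω_{ij}/n_i for every j = 1,…,N. Then the residual vector ε_α = ⟨φ(D)⟩_α − ‖⟨V⟩_α‖ · φ(⟨V⟩_α) satisfies ‖ε_α‖ ≤ Σ_{i=1}^N α_i π̃_i. -/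
open Finset
open scoped BigOperators RealInnerProductSpace

/-- Corollary (dynamic-weight reduction error with zero attraction and stimulus). -/
theorem dynamic_weight_reduction_error_zero_w
    (N : ℕ) (hN : 0 < N)
    (V : Fin N → EuclideanSpace ℝ (Fin 3)) (hV : ∀ i, ‖V i‖ = 1)
    (ω : Fin N → Fin N → ℝ) (hω : ∀ i j, ω i j = 0 ∨ ω i j = 1)
    (α : Fin N → ℝ) (hα : ∀ i, 0 ≤ α i) (hαsum : ∑ i, α i = 1)
    (w : Fin N → EuclideanSpace ℝ (Fin 3))
    (n : Fin N → ℝ) (hn : ∀ i, n i = ∑ j, ω i j)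
    (O : Fin N → EuclideanSpace ℝ (Fin 3)) (hO : ∀ i, O i = ∑ j, ω i j • V j)
    (D : Fin N → EuclideanSpace ℝ (Fin 3)) (hD : ∀ i, D i = O i + w i)
    (Vα : EuclideanSpace ℝ (Fin 3)) (hVα : Vα = ∑ i, α i • V i)
    (hn0 : ∀ i, 0 < n i) (hO0 : ∀ i, O i ≠ 0)
    (hVα0 : Vα ≠ 0) (hw0 : ∀ i, w i = 0)
    (hEig : ∀ j, α j = ∑ i, α i * ω i j / n i) :
    ‖(∑ i, α i • phi (D i)) - ‖Vα‖ • phi Vα‖ ≤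
      ∑ i, α i * (1 - ‖O i‖ / n i) := by
  have hD' : ∀ i, D i = O i := fun i => by rw [hD, hw0, add_zero]
  have hVαn : ‖Vα‖ ≠ 0 := norm_ne_zero_iff.mpr hVα0
  have hphiVα : ‖Vα‖ • phi Vα = Vα := by
    rw [phi, smul_smul, mul_inv_cancel₀ hVαn, one_smul]
  have hωnn : ∀ i j, 0 ≤ ω i j := fun i j => by rcases hω i j with h|h <;> simp [h]
  have hOn : ∀ i, ‖O i‖ ≤ n i := by
    intro i
    rw [hO, hn]
    calc ‖∑ j, ω i j • V j‖ ≤ ∑ j, ‖ω i j • V j‖ := norm_sum_le _ _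
    _ = ∑ j, ω i j := by
        refine Finset.sum_congr rfl fun j _ => ?_
        rw [norm_smul, hV, mul_one, Real.norm_eq_abs, abs_of_nonneg (hωnn i j)]
  have hkey : ∑ i, α i • ((n i)⁻¹ • O i) = Vα := by
    rw [hVα]
    have h1 : ∀ i, α i • ((n i)⁻¹ • O i) = ∑ j, (α i * ω i j / n i) • V j := by
      intro i
      rw [hO, Finset.smul_sum, Finset.smul_sum]
      refine Finset.sum_congr rfl fun j _ => ?_
      rw [smul_smul, smul_smul]
      ring_nf
    rw [Finset.sum_congr rfl fun i _ => h1 i, Finset.sum_comm]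
    refine Finset.sum_congr rfl fun j _ => ?_
    rw [← Finset.sum_smul, ← hEig j]
  calc ‖(∑ i, α i • phi (D i)) - ‖Vα‖ • phi Vα‖
      = ‖∑ i, (α i * (‖O i‖⁻¹ - (n i)⁻¹)) • O i‖ := by
        rw [hphiVα, ← hkey, ← Finset.sum_sub_distrib]
        congr 1
        refine Finset.sum_congr rfl fun i _ => ?_
        rw [hD' i, phi, smul_smul, smul_smul, ← sub_smul]
        ring_nf
    _ ≤ ∑ i, ‖(α i * (‖O i‖⁻¹ - (n i)⁻¹)) • O i‖ := norm_sum_le _ _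
    _ ≤ ∑ i, α i * (1 - ‖O i‖ / n i) := by
        refine Finset.sum_le_sum fun i _ => ?_
        have hOp : (0:ℝ) < ‖O i‖ := norm_pos_iff.mpr (hO0 i)
        have hnp := hn0 i
        have hinv : (n i)⁻¹ ≤ ‖O i‖⁻¹ := by gcongr; exact hOn i
        rw [norm_smul, Real.norm_eq_abs, abs_mul, abs_of_nonneg (hα i),
          abs_of_nonneg (sub_nonneg.mpr hinv)]
        have : (‖O i‖⁻¹ - (n i)⁻¹) * ‖O i‖ = 1 - ‖O i‖ / n i := by
          field_simp
        rw [mul_assoc, this]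
end

section
/- For all x, y ∈ ℝ³ with x ≠ 0 and x + y ≠ 0, the vector δφ(x,y) = φ(x+y) − (φ(x) + y/‖x‖ − (⟨y,x⟩/‖x‖³)·x) satisfies ‖δφ(x,y)‖ ≤ (2/‖x‖²)·‖y‖². -/
open scoped RealInnerProductSpace

lemma scalar_key (a b n s : ℝ) (ha : 0 < a) (hb : 0 < b) (hn : 0 ≤ n)
    (hb2 : b ^ 2 = a ^ 2 + 2 * s + n ^ 2) (hs : s ^ 2 ≤ a ^ 2 * n ^ 2)
    (h1 : b ≤ a + n) (h2 : a ≤ b + n) :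
    a ^ 2 * b * (a - b) ^ 2 + 2 * (a - b) * s * (a ^ 2 + s) + b * s ^ 2 ≤ 4 * n ^ 4 * b := by
  have hsv : s = (b ^ 2 - a ^ 2 - n ^ 2) / 2 := by linarith
  subst hsv
  -- a + b - n ≥ 0
  have habn : 0 ≤ a + b - n := by
    by_contra hc
    push_neg at hc
    have hw : 0 < (n - a) ^ 2 - b ^ 2 := by
      nlinarith [mul_pos (show 0 < n - a - b by linarith) (show 0 < n - a + b by linarith)]
    have hna : 0 < n := by linarith
    have h2an : 2 * a * n < n ^ 2 + a ^ 2 - b ^ 2 := by nlinarith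
    nlinarith [mul_pos (show 0 < n ^ 2 + a ^ 2 - b ^ 2 - 2 * a * n by linarith)
      (show 0 < n ^ 2 + a ^ 2 - b ^ 2 + 2 * a * n by nlinarith [mul_pos ha hna])]
  have hF : 0 ≤ 15 * n ^ 4 - 2 * (b - a) ^ 2 * n ^ 2 + 3 * (b - a) ^ 4 := by
    nlinarith [sq_nonneg ((b - a) ^ 2 - n ^ 2), sq_nonneg ((b - a) ^ 2), sq_nonneg (n ^ 2)]
  have hnt : 0 ≤ n + (b - a) := by linarith
  have h0 : 0 ≤ n - (b - a) := by linarith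
  have h2n : n - (b - a) ≤ 2 * n := by linarith
  have hQ4 : 0 ≤ 16 * n ^ 4 - (n - (b - a)) ^ 4 := by
    have := pow_le_pow_left₀ h0 h2n 4
    nlinarith [this]
  nlinarith [mul_nonneg habn hF, mul_nonneg hnt hQ4]

/-- Lemma A.1: second-order error bound for the linearization of the
normalization operator. -/
theorem deltaPhi_norm_le (x y : EuclideanSpace ℝ (Fin 3)) (hx : x ≠ 0) (hxy : x + y ≠ 0) :
    ‖phi (x + y) - (phi x + ‖x‖⁻¹ • y - (⟪y, x⟫ / ‖x‖ ^ 3) • x)‖ ≤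
      (2 / ‖x‖ ^ 2) * ‖y‖ ^ 2 := by
  set a := ‖x‖ with ha_def
  set b := ‖x + y‖ with hb_def
  set n := ‖y‖ with hn_def
  set s := (⟪y, x⟫ : ℝ) with hs_def
  have ha : 0 < a := norm_pos_iff.mpr hx
  have hb : 0 < b := norm_pos_iff.mpr hxy
  have hn : 0 ≤ n := norm_nonneg _
  have hb2 : b ^ 2 = a ^ 2 + 2 * s + n ^ 2 := by
    rw [hb_def, norm_add_sq_real, real_inner_comm]
  have hcs : s ^ 2 ≤ a ^ 2 * n ^ 2 := by
    have h := abs_real_inner_le_norm y x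
    nlinarith [sq_abs s, abs_nonneg s]
  have h1 : b ≤ a + n := norm_add_le x y
  have h2 : a ≤ b + n := by
    calc a = ‖(x + y) - y‖ := by rw [ha_def]; congr 1; abel
    _ ≤ b + n := norm_sub_le _ _
  set c1 : ℝ := b⁻¹ - a⁻¹ with hc1
  set c2 : ℝ := s / a ^ 3 with hc2
  have hδ : phi (x + y) - (phi x + ‖x‖⁻¹ • y - (⟪y, x⟫ / ‖x‖ ^ 3) • x)
      = c1 • (x + y) + c2 • x := by
    simp only [phi, hc1, hc2, ← ha_def, ← hb_def, ← hs_def]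
    module
  rw [hδ]
  have hux : ⟪x + y, x⟫ = a ^ 2 + s := by
    rw [inner_add_left, real_inner_self_eq_norm_sq]
  have hexp : ‖c1 • (x + y) + c2 • x‖ ^ 2
      = c1 ^ 2 * b ^ 2 + 2 * c1 * c2 * (a ^ 2 + s) + c2 ^ 2 * a ^ 2 := by
    rw [norm_add_sq_real, real_inner_smul_left, real_inner_smul_right, hux,
      norm_smul, norm_smul]
    simp only [Real.norm_eq_abs, mul_pow, sq_abs, ← hb_def, ← ha_def]
    ring
  have hpoly : a ^ 2 * b * (a - b) ^ 2 + 2 * (a - b) * s * (a ^ 2 + s) + b * s ^ 2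
      ≤ 4 * n ^ 4 * b := scalar_key a b n s ha hb hn hb2 hcs h1 h2
  have hsq : ‖c1 • (x + y) + c2 • x‖ ^ 2 ≤ ((2 / a ^ 2) * n ^ 2) ^ 2 := by
    rw [hexp]
    have heq : c1 ^ 2 * b ^ 2 + 2 * c1 * c2 * (a ^ 2 + s) + c2 ^ 2 * a ^ 2
        = (a ^ 2 * b * (a - b) ^ 2 + 2 * (a - b) * s * (a ^ 2 + s) + b * s ^ 2) / (a ^ 4 * b) := by
      rw [hc1, hc2]
      field_simp
    have heq2 : ((2 / a ^ 2) * n ^ 2) ^ 2 = (4 * n ^ 4 * b) / (a ^ 4 * b) := by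
      field_simp
      ring
    rw [heq, heq2]
    gcongr
  have hrhs : 0 ≤ (2 / a ^ 2) * n ^ 2 := by positivity
  calc ‖c1 • (x + y) + c2 • x‖ = Real.sqrt (‖c1 • (x + y) + c2 • x‖ ^ 2) :=
        (Real.sqrt_sq (norm_nonneg _)).symm
    _ ≤ Real.sqrt (((2 / a ^ 2) * n ^ 2) ^ 2) := Real.sqrt_le_sqrt hsq
    _ = (2 / a ^ 2) * n ^ 2 := Real.sqrt_sq hrhs
end

section
/- For every i ∈ {1,…,N} with n_i > 0, the vector δ_α O_i = O_i − n_i ⟨V⟩_α satisfies ‖δ_α O_i‖ ≤ n_i √(Q_{i,n_iα}). -/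
open Finset
open scoped BigOperators RealInnerProductSpace

/-- Lemma A.2: bound on the deviation of `O_i` from `n_i ⟨V⟩_α`. -/
theorem deltaOi_norm_le
    (N : ℕ) (hN : 0 < N)
    (V : Fin N → EuclideanSpace ℝ (Fin 3)) (hV : ∀ i, ‖V i‖ = 1)
    (ω : Fin N → Fin N → ℝ) (hω : ∀ i j, ω i j = 0 ∨ ω i j = 1)
    (α : Fin N → ℝ) (hα : ∀ i, 0 ≤ α i) (hαsum : ∑ i, α i = 1)
    (n : Fin N → ℝ) (hn : ∀ i, n i = ∑ j, ω i j)
    (O : Fin N → EuclideanSpace ℝ (Fin 3)) (hO : ∀ i, O i = ∑ j, ω i j • V j)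
    (Vα : EuclideanSpace ℝ (Fin 3)) (hVα : Vα = ∑ i, α i • V i)
    (Q : Fin N → ℝ)
    (hQ : ∀ i, Q i = (1 / n i ^ 2) *
      ∑ j, ∑ j', |ω i j - n i * α j| * |ω i j' - n i * α j'| *
        InnerProductGeometry.angle (V j) (V j') ^ 2 / 2)
    (i : Fin N) (hn0 : 0 < n i) :
    ‖O i - n i • Vα‖ ≤ n i * Real.sqrt (Q i) := by
  set c : Fin N → ℝ := fun j => ω i j - n i * α j with hc
  have hcsum : ∑ j, c j = 0 := by
    simp only [hc, sum_sub_distrib, ← mul_sum, hαsum, mul_one, ← hn i, sub_self]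
  have hvec : O i - n i • Vα = ∑ j, c j • V j := by
    rw [hO, hVα, Finset.smul_sum]
    rw [← Finset.sum_sub_distrib]
    congr 1; ext j
    rw [smul_smul, ← sub_smul]
  have hnorm2 : ‖O i - n i • Vα‖ ^ 2
      = ∑ j, ∑ j', c j * c j' * ⟪V j, V j'⟫ := by
    rw [hvec, ← real_inner_self_eq_norm_sq, inner_sum]
    refine Finset.sum_congr rfl fun j' _ => ?_
    rw [real_inner_smul_right, sum_inner, Finset.mul_sum]
    refine Finset.sum_congr rfl fun j _ => ?_
    rw [real_inner_smul_left, real_inner_comm]; ring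
  -- subtract the zero double sum ∑∑ c j c j'
  have hzero : ∑ j, ∑ j', c j * c j' = 0 := by
    rw [← Finset.sum_mul_sum, hcsum, zero_mul]
  have hterm : ∀ j j', c j * c j' * ⟪V j, V j'⟫ - c j * c j'
      ≤ |c j| * |c j'| * InnerProductGeometry.angle (V j) (V j') ^ 2 / 2 := by
    intro j j'
    have hcos : ⟪V j, V j'⟫ = Real.cos (InnerProductGeometry.angle (V j) (V j')) := by
      rw [← InnerProductGeometry.cos_angle_mul_norm_mul_norm, hV, hV]; ring
    have hb : 1 - InnerProductGeometry.angle (V j) (V j') ^ 2 / 2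
        ≤ Real.cos (InnerProductGeometry.angle (V j) (V j')) :=
      Real.one_sub_sq_div_two_le_cos
    have hb2 : Real.cos (InnerProductGeometry.angle (V j) (V j')) ≤ 1 := Real.cos_le_one _
    have h1 : c j * c j' * ⟪V j, V j'⟫ - c j * c j'
        = c j * c j' * (⟪V j, V j'⟫ - 1) := by ring
    have h2 : |c j * c j' * (⟪V j, V j'⟫ - 1)|
        ≤ |c j| * |c j'| * (InnerProductGeometry.angle (V j) (V j') ^ 2 / 2) := by
      rw [abs_mul, abs_mul]
      refine mul_le_mul_of_nonneg_left ?_ (by positivity)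
      rw [hcos, abs_sub_comm, abs_of_nonneg (by linarith)]
      linarith
    calc c j * c j' * ⟪V j, V j'⟫ - c j * c j'
        = c j * c j' * (⟪V j, V j'⟫ - 1) := h1
      _ ≤ |c j * c j' * (⟪V j, V j'⟫ - 1)| := le_abs_self _
      _ ≤ |c j| * |c j'| * (InnerProductGeometry.angle (V j) (V j') ^ 2 / 2) := h2
      _ = |c j| * |c j'| * InnerProductGeometry.angle (V j) (V j') ^ 2 / 2 := by ring
  have hQval : Q i = (1 / n i ^ 2) *
      ∑ j, ∑ j', |c j| * |c j'| * InnerProductGeometry.angle (V j) (V j') ^ 2 / 2 := hQ i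
  have hQnonneg : 0 ≤ Q i := by
    rw [hQval]
    have : 0 ≤ ∑ j, ∑ j', |c j| * |c j'| * InnerProductGeometry.angle (V j) (V j') ^ 2 / 2 :=
      Finset.sum_nonneg fun j _ => Finset.sum_nonneg fun j' _ => by positivity
    positivity
  have hmain : ‖O i - n i • Vα‖ ^ 2 ≤ n i ^ 2 * Q i := by
    rw [hnorm2, hQval]
    rw [← mul_assoc]
    rw [mul_one_div, div_self (by positivity), one_mul]
    calc ∑ j, ∑ j', c j * c j' * ⟪V j, V j'⟫
        = ∑ j, ∑ j', (c j * c j' * ⟪V j, V j'⟫ - c j * c j') := by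
          rw [← sub_zero (∑ j, ∑ j', c j * c j' * ⟪V j, V j'⟫), ← hzero,
            ← Finset.sum_sub_distrib]
          exact Finset.sum_congr rfl fun j _ => by rw [← Finset.sum_sub_distrib]
      _ ≤ _ := Finset.sum_le_sum fun j _ => Finset.sum_le_sum fun j' _ => hterm j j'
  have h1 : ‖O i - n i • Vα‖ ≤ Real.sqrt (n i ^ 2 * Q i) := by
    rw [← Real.sqrt_sq (norm_nonneg _)]
    exact Real.sqrt_le_sqrt hmain
  calc ‖O i - n i • Vα‖ ≤ Real.sqrt (n i ^ 2 * Q i) := h1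
    _ = n i * Real.sqrt (Q i) := by
        rw [Real.sqrt_mul (by positivity), Real.sqrt_sq hn0.le]
end

section
/- For every nonzero z ∈ ℝ³ with coordinates (z₁, z₂, z₃), writing e₁ = (1,0,0), one has ‖z/‖z‖ − (1, z₂, z₃)‖² ≤ 4 ‖z − e₁‖⁴. -/
lemma key_poly_ineq (r t : ℝ) (hr : 0 < r) (ht : 0 ≤ t) (ht2 : t ≤ 2*r) :
    t^2 + (1-r)^2 * t * (2*r - t) ≤ 4*r^2*((r-1)^2 + 2*t)^2 := by
  have hu : 0 ≤ 2*r - t := by linarith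
  nlinarith [sq_nonneg (4*(2*r-t) - 4*(2*r-t)^2 + (2*r-t)^3),
    mul_nonneg (mul_nonneg (mul_nonneg ht hu) (sq_nonneg ((2*r-t)-2)))
      (by positivity : (0:ℝ) ≤ 3*(2*r-t)^2+2),
    mul_nonneg (mul_nonneg ht ht) hu,
    mul_nonneg (mul_nonneg ht ht) (sq_nonneg ((2*r-t) - (2*r-t)^2)),
    mul_nonneg (mul_nonneg ht ht) (by positivity : (0:ℝ) ≤ (2*r-t)^4),
    mul_nonneg (mul_nonneg (mul_nonneg ht ht) ht)
      (by positivity : (0:ℝ) ≤ 32 + 28*(2*r-t) + 16*(2*r-t)^2 + 20*(2*r-t)^3),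
    mul_nonneg (mul_nonneg (mul_nonneg (mul_nonneg ht ht) ht) ht)
      (by positivity : (0:ℝ) ≤ 24 + 24*(2*r-t) + 15*(2*r-t)^2),
    mul_nonneg (mul_nonneg (mul_nonneg (mul_nonneg (mul_nonneg ht ht) ht) ht) ht)
      (by positivity : (0:ℝ) ≤ 8 + 6*(2*r-t)),
    pow_nonneg ht 6]

lemma key_ineq (a b c r : ℝ) (hr : 0 < r) (h : r^2 = a^2 + b^2 + c^2) :
    (r⁻¹*a - 1)^2 + (r⁻¹*b - b)^2 + (r⁻¹*c - c)^2 ≤ 4*((a-1)^2 + b^2 + c^2)^2 := by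
  have ha : a ≤ r := by nlinarith [sq_nonneg (r - a), sq_nonneg (r + a)]
  have ha' : -r ≤ a := by nlinarith [sq_nonneg (r - a), sq_nonneg (r + a)]
  have e : (r⁻¹*a - 1)^2 + (r⁻¹*b - b)^2 + (r⁻¹*c - c)^2
      = ((a - r)^2 + (1 - r)^2 * (b^2 + c^2)) / r^2 := by
    field_simp
    ring
  rw [e, div_le_iff₀ (by positivity)]
  have hk := key_poly_ineq r (r - a) hr (by linarith) (by linarith)
  have hs : b^2 + c^2 = (r - a) * (2*r - (r - a)) := by nlinarith [h]
  have hD : (a-1)^2 + b^2 + c^2 = (r-1)^2 + 2*(r - a) := by nlinarith [h]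
  rw [hD, hs]
  nlinarith [hk]

/-- Key inequality in the proof of Lemma A.1:
`‖z/‖z‖ − (1, z₂, z₃)‖² ≤ 4‖z − e₁‖⁴` for every nonzero `z ∈ ℝ³`. -/
theorem normalized_sub_ineq (z : EuclideanSpace ℝ (Fin 3)) (hz : z ≠ 0) :
    ‖‖z‖⁻¹ • z - (WithLp.equiv 2 (Fin 3 → ℝ)).symm ![1, z 1, z 2]‖ ^ 2 ≤
      4 * ‖z - (WithLp.equiv 2 (Fin 3 → ℝ)).symm ![1, 0, 0]‖ ^ 4 := by
  have hr : 0 < ‖z‖ := norm_pos_iff.mpr hz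
  have hnorm : ∀ x : EuclideanSpace ℝ (Fin 3), ‖x‖^2 = x 0^2 + x 1^2 + x 2^2 := by
    intro x
    rw [EuclideanSpace.norm_eq, Real.sq_sqrt (by positivity)]
    simp [Fin.sum_univ_three, sq]
  have h1 : ‖‖z‖⁻¹ • z - (WithLp.equiv 2 (Fin 3 → ℝ)).symm ![1, z 1, z 2]‖^2
      = (‖z‖⁻¹ * z 0 - 1)^2 + (‖z‖⁻¹ * z 1 - z 1)^2 + (‖z‖⁻¹ * z 2 - z 2)^2 := by
    rw [hnorm]
    simp [WithLp.equiv_symm_apply, PiLp.toLp_apply]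
  have h2 : ‖z - (WithLp.equiv 2 (Fin 3 → ℝ)).symm ![1, 0, 0]‖^2
      = (z 0 - 1)^2 + z 1^2 + z 2^2 := by
    rw [hnorm]
    simp [WithLp.equiv_symm_apply, PiLp.toLp_apply]
  have h4 : ‖z - (WithLp.equiv 2 (Fin 3 → ℝ)).symm ![1, 0, 0]‖^4
      = ((z 0 - 1)^2 + z 1^2 + z 2^2)^2 := by
    rw [show (4:ℕ) = 2*2 by rfl, pow_mul, h2]
  rw [h1, h4]
  exact key_ineq (z 0) (z 1) (z 2) ‖z‖ hr (hnorm z)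
end

section
/- For every i ∈ {1,…,N} with n_i > 0 and O_i ≠ 0, one has ‖φ(O_i) − ⟨V⟩_α‖ ≤ π̃_i + √(Q_{i,n_iα}). -/
open Finset
open scoped BigOperators RealInnerProductSpace

lemma one_sub_cos_le_half_sq (θ : ℝ) : 1 - Real.cos θ ≤ θ ^ 2 / 2 := by
  have h : Real.cos θ = 1 - 2 * Real.sin (θ / 2) ^ 2 := by
    have := Real.cos_two_mul (θ / 2)
    have h2 : 2 * (θ / 2) = θ := by ring
    rw [h2] at this
    have := Real.sin_sq_add_cos_sq (θ / 2)
    nlinarith [Real.sin_sq_add_cos_sq (θ / 2), Real.cos_two_mul (θ / 2)]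
  have hs : Real.sin (θ / 2) ^ 2 ≤ (θ / 2) ^ 2 := Real.sin_sq_le_sq
  nlinarith

lemma inner_sub_one_le {E : Type*} [NormedAddCommGroup E] [InnerProductSpace ℝ E]
    (x y : E) (hx : ‖x‖ = 1) (hy : ‖y‖ = 1) :
    1 - ⟪x, y⟫ ≤ InnerProductGeometry.angle x y ^ 2 / 2 := by
  have h := InnerProductGeometry.cos_angle x y
  rw [hx, hy] at h
  simp only [mul_one, div_one] at h
  have := one_sub_cos_le_half_sq (InnerProductGeometry.angle x y)
  linarith [this, h.symm.le, h.le]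

/-- Bound on `ζ_{i,2}` in the proof of Proposition A.3:
`‖φ(O_i) − ⟨V⟩_α‖ ≤ π̃_i + √(Q_{i, n_i α})`. -/
theorem zeta2_norm_le
    (N : ℕ) (hN : 0 < N)
    (V : Fin N → EuclideanSpace ℝ (Fin 3)) (hV : ∀ i, ‖V i‖ = 1)
    (ω : Fin N → Fin N → ℝ) (hω : ∀ i j, ω i j = 0 ∨ ω i j = 1)
    (α : Fin N → ℝ) (hα : ∀ i, 0 ≤ α i) (hαsum : ∑ i, α i = 1)
    (n : Fin N → ℝ) (hn : ∀ i, n i = ∑ j, ω i j)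
    (O : Fin N → EuclideanSpace ℝ (Fin 3)) (hO : ∀ i, O i = ∑ j, ω i j • V j)
    (Vα : EuclideanSpace ℝ (Fin 3)) (hVα : Vα = ∑ i, α i • V i)
    (Q : Fin N → ℝ)
    (hQ : ∀ i, Q i = (1 / n i ^ 2) *
      ∑ j, ∑ j', |ω i j - n i * α j| * |ω i j' - n i * α j'| *
        InnerProductGeometry.angle (V j) (V j') ^ 2 / 2)
    (i : Fin N) (hn0 : 0 < n i) (hO0 : O i ≠ 0) :
    ‖phi (O i) - Vα‖ ≤ (1 - ‖O i‖ / n i) + Real.sqrt (Q i) := by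
  set c : Fin N → ℝ := fun j => ω i j - n i * α j with hc
  have hr : (0:ℝ) < ‖O i‖ := norm_pos_iff.mpr hO0
  -- ‖O i‖ ≤ n i
  have hOn : ‖O i‖ ≤ n i := by
    rw [hO, hn]
    refine (norm_sum_le _ _).trans ?_
    apply Finset.sum_le_sum
    intro j _
    rw [norm_smul, hV, mul_one]
    rcases hω i j with h | h <;> simp [h]
  -- sum of c is zero
  have hcsum : ∑ j, c j = 0 := by
    simp only [hc]
    rw [Finset.sum_sub_distrib, ← Finset.mul_sum, hαsum, ← hn]
    ring
  -- decomposition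
  have hdecomp : (n i)⁻¹ • O i - Vα = (n i)⁻¹ • ∑ j, c j • V j := by
    rw [hO, hVα, Finset.smul_sum, Finset.smul_sum, ← Finset.sum_sub_distrib]
    refine Finset.sum_congr rfl fun j _ => ?_
    rw [smul_smul, smul_smul, ← sub_smul]
    congr 1
    simp only [hc]
    field_simp
  -- bound ‖∑ c j • V j‖²
  set w : EuclideanSpace ℝ (Fin 3) := ∑ j, c j • V j with hw
  have hinner : ‖w‖ ^ 2 = ∑ j, ∑ j', c j * c j' * ⟪V j, V j'⟫ := by
    rw [← real_inner_self_eq_norm_sq, hw, sum_inner]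
    refine Finset.sum_congr rfl fun j _ => ?_
    rw [real_inner_smul_left, inner_sum, Finset.mul_sum]
    refine Finset.sum_congr rfl fun j' _ => ?_
    rw [real_inner_smul_right]
    ring
  have hkey : ‖w‖ ^ 2 ≤ ∑ j, ∑ j', |c j| * |c j'| *
      InnerProductGeometry.angle (V j) (V j') ^ 2 / 2 := by
    have hzero : ∑ j, ∑ j', c j * c j' * (1:ℝ) = 0 := by
      simp only [mul_one]
      rw [← Finset.sum_mul_sum] at *
      · rw [hcsum]; ring
    have : ‖w‖ ^ 2 = ∑ j, ∑ j', c j * c j' * (⟪V j, V j'⟫ - 1) := by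
      rw [hinner]
      have expand : ∀ j j', c j * c j' * (⟪V j, V j'⟫ - 1)
          = c j * c j' * ⟪V j, V j'⟫ - c j * c j' * 1 := fun j j' => by ring
      simp only [expand, Finset.sum_sub_distrib]
      rw [hzero]
      ring
    rw [this]
    refine Finset.sum_le_sum fun j _ => Finset.sum_le_sum fun j' _ => ?_
    have hle1 : ⟪V j, V j'⟫ ≤ 1 := by
      have := real_inner_le_norm (V j) (V j')
      rwa [hV, hV, mul_one] at this
    have hang : 1 - ⟪V j, V j'⟫ ≤ InnerProductGeometry.angle (V j) (V j') ^ 2 / 2 :=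
      inner_sub_one_le _ _ (hV j) (hV j')
    calc c j * c j' * (⟪V j, V j'⟫ - 1)
        ≤ |c j| * |c j'| * (1 - ⟪V j, V j'⟫) := by
          have h1 : c j * c j' * (⟪V j, V j'⟫ - 1) ≤ |c j * c j' * (⟪V j, V j'⟫ - 1)| :=
            le_abs_self _
          rw [abs_mul, abs_mul, abs_of_nonpos (by linarith : ⟪V j, V j'⟫ - 1 ≤ 0)] at h1
          linarith
      _ ≤ |c j| * |c j'| * InnerProductGeometry.angle (V j) (V j') ^ 2 / 2 := by
          have := mul_le_mul_of_nonneg_left hang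
            (mul_nonneg (abs_nonneg (c j)) (abs_nonneg (c j')))
          linarith
  -- second term bound
  have hterm2 : ‖(n i)⁻¹ • O i - Vα‖ ≤ Real.sqrt (Q i) := by
    apply Real.le_sqrt_of_sq_le
    rw [hdecomp, norm_smul, mul_pow, hQ]
    rw [norm_inv, Real.norm_eq_abs, abs_of_pos hn0]
    have h1 : ((n i)⁻¹) ^ 2 = 1 / n i ^ 2 := by field_simp
    rw [h1]
    have := hkey
    have hpos : (0:ℝ) < 1 / n i ^ 2 := by positivity
    calc 1 / n i ^ 2 * ‖w‖ ^ 2 ≤ 1 / n i ^ 2 * ∑ j, ∑ j', |c j| * |c j'| *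
          InnerProductGeometry.angle (V j) (V j') ^ 2 / 2 :=
        mul_le_mul_of_nonneg_left hkey hpos.le
      _ = _ := rfl
  -- first term
  have hterm1 : ‖phi (O i) - (n i)⁻¹ • O i‖ = 1 - ‖O i‖ / n i := by
    unfold phi
    rw [← sub_smul, norm_smul, Real.norm_eq_abs]
    rw [abs_of_nonneg (by
      have h1 : (n i)⁻¹ ≤ ‖O i‖⁻¹ := inv_anti₀ hr hOn
      linarith)]
    field_simp
  calc ‖phi (O i) - Vα‖
      ≤ ‖phi (O i) - (n i)⁻¹ • O i‖ + ‖(n i)⁻¹ • O i - Vα‖ := by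
        have := norm_sub_le_norm_sub_add_norm_sub (phi (O i)) ((n i)⁻¹ • O i) Vα
        exact this
    _ ≤ (1 - ‖O i‖ / n i) + Real.sqrt (Q i) := by
        rw [hterm1]; linarith
end

section
/- Assume n_i > 0 and O_i ≠ 0 for all i = 1,…,N, and assume that α is a normalized eigenvector centrality of the orientation network, i.e. α_j = Σ_{i=1}^N α_i ω_{ij}/n_i for every j = 1,…,N. Then Σ_{i=1}^N α_i (φ(O_i) − ⟨V⟩_α) = Σ_{i=1}^N α_i (φ(O_i) − O_i/n_i), and consequently ‖Σ_{i=1}^N α_i (φ(O_i) − ⟨V⟩_α)‖ ≤ Σ_{i=1}^N α_i π̃_i. -/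
open Finset
open scoped BigOperators RealInnerProductSpace

/-- Key step in the proof of Theorem 2: if `α` is a normalized eigenvector
centrality of the orientation network, then
`Σ_i α_i (φ(O_i) − ⟨V⟩_α) = Σ_i α_i (φ(O_i) − O_i/n_i)` and consequently
`‖Σ_i α_i (φ(O_i) − ⟨V⟩_α)‖ ≤ Σ_i α_i π̃_i`. -/
theorem omega2_eq_and_norm_le
    (N : ℕ) (hN : 0 < N)
    (V : Fin N → EuclideanSpace ℝ (Fin 3)) (hV : ∀ i, ‖V i‖ = 1)
    (ω : Fin N → Fin N → ℝ) (hω : ∀ i j, ω i j = 0 ∨ ω i j = 1)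
    (α : Fin N → ℝ) (hα : ∀ i, 0 ≤ α i) (hαsum : ∑ i, α i = 1)
    (n : Fin N → ℝ) (hn : ∀ i, n i = ∑ j, ω i j)
    (O : Fin N → EuclideanSpace ℝ (Fin 3)) (hO : ∀ i, O i = ∑ j, ω i j • V j)
    (Vα : EuclideanSpace ℝ (Fin 3)) (hVα : Vα = ∑ i, α i • V i)
    (hn0 : ∀ i, 0 < n i) (hO0 : ∀ i, O i ≠ 0)
    (hEig : ∀ j, α j = ∑ i, α i * ω i j / n i) :
    (∑ i, α i • (phi (O i) - Vα)) = (∑ i, α i • (phi (O i) - (n i)⁻¹ • O i)) ∧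
    ‖∑ i, α i • (phi (O i) - Vα)‖ ≤ ∑ i, α i * (1 - ‖O i‖ / n i) := by
  have hωnn : ∀ i j, (0:ℝ) ≤ ω i j := by
    intro i j; rcases hω i j with h | h <;> simp [h]
  have hOn : ∀ i, ‖O i‖ ≤ n i := by
    intro i
    calc ‖O i‖ ≤ ∑ j, ‖ω i j • V j‖ := by rw [hO i]; exact norm_sum_le _ _
    _ = ∑ j, ω i j := by
        refine Finset.sum_congr rfl fun j _ => ?_
        rw [norm_smul, hV, Real.norm_eq_abs, abs_of_nonneg (hωnn i j), mul_one]
    _ = n i := (hn i).symm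
  have key : Vα = ∑ i, α i • (n i)⁻¹ • O i := by
    rw [hVα]
    have : ∀ i, α i • (n i)⁻¹ • O i = ∑ j, (α i * ω i j / n i) • V j := by
      intro i
      rw [hO i, Finset.smul_sum, Finset.smul_sum]
      refine Finset.sum_congr rfl fun j _ => ?_
      rw [smul_smul, smul_smul]
      ring_nf
    rw [Finset.sum_congr rfl fun i _ => this i, Finset.sum_comm]
    refine Finset.sum_congr rfl fun j _ => ?_
    rw [← Finset.sum_smul, ← hEig j]
  have heq : (∑ i, α i • (phi (O i) - Vα)) = (∑ i, α i • (phi (O i) - (n i)⁻¹ • O i)) := by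
    simp only [smul_sub, Finset.sum_sub_distrib]
    congr 1
    rw [← Finset.sum_smul, hαsum, one_smul, key]
  refine ⟨heq, ?_⟩
  rw [heq]
  calc ‖∑ i, α i • (phi (O i) - (n i)⁻¹ • O i)‖
      ≤ ∑ i, ‖α i • (phi (O i) - (n i)⁻¹ • O i)‖ := norm_sum_le _ _
    _ ≤ ∑ i, α i * (1 - ‖O i‖ / n i) := by
        refine Finset.sum_le_sum fun i _ => ?_
        rw [norm_smul, Real.norm_eq_abs, abs_of_nonneg (hα i)]
        refine mul_le_mul_of_nonneg_left ?_ (hα i)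
        have hx : (0:ℝ) < ‖O i‖ := norm_pos_iff.mpr (hO0 i)
        have : phi (O i) - (n i)⁻¹ • O i = (‖O i‖⁻¹ - (n i)⁻¹) • O i := by
          rw [sub_smul]; rfl
        rw [this, norm_smul, Real.norm_eq_abs]
        have h1 : (n i)⁻¹ ≤ ‖O i‖⁻¹ := inv_anti₀ hx (hOn i)
        rw [abs_of_nonneg (sub_nonneg.mpr h1), sub_mul, inv_mul_cancel₀ (ne_of_gt hx)]
        rw [div_eq_inv_mul]
end

section
/- Let i ∈ {1,…,N} and assume n_i > 0 and O_i ≠ 0. Then ‖(‖O_i‖⁻³ − n_i⁻³)·⟨w_i, O_i⟩·O_i‖ ≤ ρ_i (1 − π_i³) ≤ 3 π̃_i ρ_i. -/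
open Finset
open scoped BigOperators RealInnerProductSpace

/-- Bound (A.12) on `ζ_{i,4}` in the proof of Proposition A.3:
`‖(‖O_i‖⁻³ − n_i⁻³)⟨w_i, O_i⟩ O_i‖ ≤ ρ_i (1 − π_i³) ≤ 3 π̃_i ρ_i`. -/
theorem zeta4_norm_le
    (N : ℕ) (hN : 0 < N)
    (V : Fin N → EuclideanSpace ℝ (Fin 3)) (hV : ∀ i, ‖V i‖ = 1)
    (ω : Fin N → Fin N → ℝ) (hω : ∀ i j, ω i j = 0 ∨ ω i j = 1)
    (n : Fin N → ℝ) (hn : ∀ i, n i = ∑ j, ω i j)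
    (O : Fin N → EuclideanSpace ℝ (Fin 3)) (hO : ∀ i, O i = ∑ j, ω i j • V j)
    (w : Fin N → EuclideanSpace ℝ (Fin 3))
    (i : Fin N) (hn0 : 0 < n i) (hO0 : O i ≠ 0) :
    ‖(((‖O i‖ ^ 3)⁻¹ - (n i ^ 3)⁻¹) * ⟪w i, O i⟫) • O i‖ ≤
        (‖w i‖ / ‖O i‖) * (1 - (‖O i‖ / n i) ^ 3) ∧
      (‖w i‖ / ‖O i‖) * (1 - (‖O i‖ / n i) ^ 3) ≤
        3 * (1 - ‖O i‖ / n i) * (‖w i‖ / ‖O i‖) := by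
  have hOpos : 0 < ‖O i‖ := norm_pos_iff.mpr hO0
  have hOle : ‖O i‖ ≤ n i := by
    rw [hO, hn]
    refine (norm_sum_le _ _).trans ?_
    refine Finset.sum_le_sum fun j _ => ?_
    rw [norm_smul, hV, mul_one]
    rcases hω i j with h | h <;> simp [h]
  have hinv : (n i ^ 3)⁻¹ ≤ (‖O i‖ ^ 3)⁻¹ := by
    apply inv_anti₀ (by positivity)
    exact pow_le_pow_left₀ hOpos.le hOle 3
  have hcs : |⟪w i, O i⟫| ≤ ‖w i‖ * ‖O i‖ := abs_real_inner_le_norm _ _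
  constructor
  · rw [norm_smul, Real.norm_eq_abs, abs_mul, abs_of_nonneg (sub_nonneg.mpr hinv)]
    have h1 : ((‖O i‖ ^ 3)⁻¹ - (n i ^ 3)⁻¹) * |⟪w i, O i⟫| * ‖O i‖ ≤
        ((‖O i‖ ^ 3)⁻¹ - (n i ^ 3)⁻¹) * (‖w i‖ * ‖O i‖) * ‖O i‖ := by
      exact mul_le_mul_of_nonneg_right
        (mul_le_mul_of_nonneg_left hcs (sub_nonneg.mpr hinv)) hOpos.le
    refine h1.trans_eq ?_
    field_simp
  · have hπ : ‖O i‖ / n i ≤ 1 := (div_le_one hn0).mpr hOle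
    have hπ0 : 0 < ‖O i‖ / n i := div_pos hOpos hn0
    have hρ : 0 ≤ ‖w i‖ / ‖O i‖ := by positivity
    have key : 1 - (‖O i‖ / n i) ^ 3 ≤ 3 * (1 - ‖O i‖ / n i) := by
      nlinarith [sq_nonneg (1 - ‖O i‖ / n i), hπ0.le]
    calc ‖w i‖ / ‖O i‖ * (1 - (‖O i‖ / n i) ^ 3)
        ≤ ‖w i‖ / ‖O i‖ * (3 * (1 - ‖O i‖ / n i)) := by
          exact mul_le_mul_of_nonneg_left key hρ
      _ = 3 * (1 - ‖O i‖ / n i) * (‖w i‖ / ‖O i‖) := by ring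
end

section
/- Let i ∈ {1,…,N} and assume n_i > 0 and O_i ≠ 0. Then ‖(⟨w_i, ⟨V⟩_α⟩/n_i)·⟨V⟩_α − (⟨w_i, O_i⟩/n_i³)·O_i‖ ≤ 2 (‖w_i‖/n_i) √(Q_{i,n_iα}) ≤ 2 ρ_i √(Q_{i,n_iα}). -/
open Finset
open scoped BigOperators RealInnerProductSpace

/-- Bound (A.14) on `ζ_{i,6}` in the proof of Proposition A.3:
`‖(⟨w_i,⟨V⟩_α⟩/n_i)⟨V⟩_α − (⟨w_i,O_i⟩/n_i³)O_i‖
  ≤ 2(‖w_i‖/n_i)√(Q_{i,n_iα}) ≤ 2 ρ_i √(Q_{i,n_iα})`. -/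
theorem zeta6_norm_le
    (N : ℕ) (hN : 0 < N)
    (V : Fin N → EuclideanSpace ℝ (Fin 3)) (hV : ∀ i, ‖V i‖ = 1)
    (ω : Fin N → Fin N → ℝ) (hω : ∀ i j, ω i j = 0 ∨ ω i j = 1)
    (α : Fin N → ℝ) (hα : ∀ i, 0 ≤ α i) (hαsum : ∑ i, α i = 1)
    (n : Fin N → ℝ) (hn : ∀ i, n i = ∑ j, ω i j)
    (O : Fin N → EuclideanSpace ℝ (Fin 3)) (hO : ∀ i, O i = ∑ j, ω i j • V j)
    (Vα : EuclideanSpace ℝ (Fin 3)) (hVα : Vα = ∑ i, α i • V i)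
    (Q : Fin N → ℝ)
    (hQ : ∀ i, Q i = (1 / n i ^ 2) *
      ∑ j, ∑ j', |ω i j - n i * α j| * |ω i j' - n i * α j'| *
        InnerProductGeometry.angle (V j) (V j') ^ 2 / 2)
    (w : Fin N → EuclideanSpace ℝ (Fin 3))
    (i : Fin N) (hn0 : 0 < n i) (hO0 : O i ≠ 0) :
    ‖(⟪w i, Vα⟫ / n i) • Vα - (⟪w i, O i⟫ / n i ^ 3) • O i‖ ≤
        2 * (‖w i‖ / n i) * Real.sqrt (Q i) ∧
      2 * (‖w i‖ / n i) * Real.sqrt (Q i) ≤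
        2 * (‖w i‖ / ‖O i‖) * Real.sqrt (Q i) := by
  set c : Fin N → ℝ := fun j => ω i j - n i * α j with hc
  have hcsum : ∑ j, c j = 0 := by
    simp [hc, Finset.sum_sub_distrib, ← Finset.mul_sum, hαsum, (hn i).symm]
  -- the key sum bound
  set S : EuclideanSpace ℝ (Fin 3) := ∑ j, c j • V j with hS
  have hSsq : ‖S‖ ^ 2 = ∑ j, ∑ j', c j * c j' * ⟪V j, V j'⟫ := by
    rw [← real_inner_self_eq_norm_sq, hS, sum_inner]
    refine Finset.sum_congr rfl fun j _ => ?_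
    rw [inner_sum]
    refine Finset.sum_congr rfl fun j' _ => ?_
    rw [real_inner_smul_left, real_inner_smul_right]; ring
  have hSle : ‖S‖ ^ 2 ≤ ∑ j, ∑ j', |c j| * |c j'| *
      InnerProductGeometry.angle (V j) (V j') ^ 2 / 2 := by
    have hzero : ∑ j, ∑ j', c j * c j' = 0 := by
      rw [← Finset.sum_mul_sum]
      · simp [hcsum]
    calc ‖S‖ ^ 2 = ∑ j, ∑ j', (c j * c j' * ⟪V j, V j'⟫ - c j * c j') := by
          rw [hSsq]
          simp [Finset.sum_sub_distrib]
          rw [← Finset.sum_sub_distrib]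
          simp [Finset.sum_sub_distrib, hzero]
      _ ≤ _ := by
          refine Finset.sum_le_sum fun j _ => Finset.sum_le_sum fun j' _ => ?_
          have hinner : ⟪V j, V j'⟫ =
              Real.cos (InnerProductGeometry.angle (V j) (V j')) := by
            rw [InnerProductGeometry.cos_angle, hV, hV]; simp
          set θ := InnerProductGeometry.angle (V j) (V j')
          have h1 : Real.cos θ - 1 ≤ 0 := by
            have := Real.cos_le_one θ; linarith
          have h2 : 1 - Real.cos θ ≤ θ ^ 2 / 2 := by
            have := Real.one_sub_sq_div_two_le_cos (x := θ); linarith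
          calc c j * c j' * ⟪V j, V j'⟫ - c j * c j'
              = c j * c j' * (Real.cos θ - 1) := by rw [hinner]; ring
            _ ≤ |c j * c j' * (Real.cos θ - 1)| := le_abs_self _
            _ = |c j| * |c j'| * (1 - Real.cos θ) := by
                rw [abs_mul, abs_mul, abs_of_nonpos h1]; ring_nf
            _ ≤ |c j| * |c j'| * (θ ^ 2 / 2) := by
                have : 0 ≤ |c j| * |c j'| := by positivity
                nlinarith
            _ = |c j| * |c j'| * θ ^ 2 / 2 := by ring
  have hQi : Q i = (1 / n i ^ 2) * ∑ j, ∑ j', |c j| * |c j'| *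
      InnerProductGeometry.angle (V j) (V j') ^ 2 / 2 := hQ i
  -- ‖Vα - (1/n)O‖ ≤ √Q
  have hdiff : Vα - (n i)⁻¹ • O i = -(n i)⁻¹ • S := by
    rw [hVα, hO i, hS, Finset.smul_sum, Finset.smul_sum, ← Finset.sum_sub_distrib]
    refine Finset.sum_congr rfl fun j _ => ?_
    rw [smul_smul, smul_smul, ← sub_smul]
    congr 1
    simp only [hc]
    field_simp
    ring
  have hdn : ‖Vα - (n i)⁻¹ • O i‖ ^ 2 ≤ Q i := by
    rw [hdiff, norm_smul, hQi]
    rw [mul_pow]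
    have h1 : ‖-(n i)⁻¹‖ ^ 2 = 1 / n i ^ 2 := by
      rw [norm_neg, Real.norm_eq_abs, ← abs_pow]
      rw [abs_of_pos (by positivity)]
      field_simp
    rw [h1]
    exact mul_le_mul_of_nonneg_left hSle (by positivity)
  have hQnn : 0 ≤ Q i := le_trans (by positivity) hdn
  have hdle : ‖Vα - (n i)⁻¹ • O i‖ ≤ Real.sqrt (Q i) := by
    rw [← Real.sqrt_sq (norm_nonneg _)]
    exact Real.sqrt_le_sqrt hdn
  -- norms of Vα and B
  have hVαle : ‖Vα‖ ≤ 1 := by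
    rw [hVα]
    calc ‖∑ j, α j • V j‖ ≤ ∑ j, ‖α j • V j‖ := norm_sum_le _ _
      _ = ∑ j, α j := by
          refine Finset.sum_congr rfl fun j _ => ?_
          rw [norm_smul, hV, Real.norm_eq_abs, abs_of_nonneg (hα j)]; simp
      _ = 1 := hαsum
  have hOle : ‖O i‖ ≤ n i := by
    rw [hO i, hn i]
    calc ‖∑ j, ω i j • V j‖ ≤ ∑ j, ‖ω i j • V j‖ := norm_sum_le _ _
      _ = ∑ j, ω i j := by
          refine Finset.sum_congr rfl fun j _ => ?_
          rw [norm_smul, hV, Real.norm_eq_abs]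
          rcases hω i j with h | h <;> simp [h]
  have hBle : ‖(n i)⁻¹ • O i‖ ≤ 1 := by
    rw [norm_smul, Real.norm_eq_abs, abs_of_pos (by positivity)]
    rw [inv_mul_le_iff₀ hn0]
    simpa using hOle
  -- main decomposition
  set A := Vα with hA
  set B := (n i)⁻¹ • O i with hB
  have hdecomp : (⟪w i, Vα⟫ / n i) • Vα - (⟪w i, O i⟫ / n i ^ 3) • O i
      = (n i)⁻¹ • ((⟪w i, A⟫) • A - (⟪w i, B⟫) • B) := by
    rw [hB, real_inner_smul_right]
    have hne : n i ≠ 0 := hn0.ne'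
    match_scalars
    · rw [div_eq_inv_mul, ← hA]; ring
    · field_simp
  have hkey : ‖(⟪w i, A⟫) • A - (⟪w i, B⟫) • B‖ ≤ 2 * ‖w i‖ * Real.sqrt (Q i) := by
    have heq : (⟪w i, A⟫) • A - (⟪w i, B⟫) • B
        = (⟪w i, A⟫) • (A - B) + (⟪w i, A - B⟫) • B := by
      rw [inner_sub_right, sub_smul, smul_sub]; abel
    rw [heq]
    have habs1 : |⟪w i, A⟫| ≤ ‖w i‖ := by
      calc |⟪w i, A⟫| ≤ ‖w i‖ * ‖A‖ := abs_real_inner_le_norm _ _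
        _ ≤ ‖w i‖ * 1 := mul_le_mul_of_nonneg_left hVαle (norm_nonneg _)
        _ = ‖w i‖ := mul_one _
    have habs2 : |⟪w i, A - B⟫| ≤ ‖w i‖ * Real.sqrt (Q i) := by
      calc |⟪w i, A - B⟫| ≤ ‖w i‖ * ‖A - B‖ := abs_real_inner_le_norm _ _
        _ ≤ ‖w i‖ * Real.sqrt (Q i) :=
            mul_le_mul_of_nonneg_left hdle (norm_nonneg _)
    calc ‖(⟪w i, A⟫) • (A - B) + (⟪w i, A - B⟫) • B‖
        ≤ ‖(⟪w i, A⟫) • (A - B)‖ + ‖(⟪w i, A - B⟫) • B‖ := norm_add_le _ _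
      _ = |⟪w i, A⟫| * ‖A - B‖ + |⟪w i, A - B⟫| * ‖B‖ := by
          rw [norm_smul, norm_smul, Real.norm_eq_abs, Real.norm_eq_abs]
      _ ≤ ‖w i‖ * Real.sqrt (Q i) + ‖w i‖ * Real.sqrt (Q i) * 1 :=
          add_le_add (mul_le_mul habs1 hdle (norm_nonneg _) (norm_nonneg _))
            (mul_le_mul habs2 hBle (norm_nonneg _) (by positivity))
      _ = 2 * ‖w i‖ * Real.sqrt (Q i) := by ring
  constructor
  · rw [hdecomp, norm_smul, Real.norm_eq_abs, abs_of_pos (by positivity : (0:ℝ) < (n i)⁻¹)]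
    calc (n i)⁻¹ * ‖(⟪w i, A⟫) • A - (⟪w i, B⟫) • B‖
        ≤ (n i)⁻¹ * (2 * ‖w i‖ * Real.sqrt (Q i)) :=
          mul_le_mul_of_nonneg_left hkey (by positivity)
      _ = 2 * (‖w i‖ / n i) * Real.sqrt (Q i) := by field_simp
  · have hO0' : 0 < ‖O i‖ := norm_pos_iff.mpr hO0
    have : ‖w i‖ / n i ≤ ‖w i‖ / ‖O i‖ :=
      div_le_div_of_nonneg_left (norm_nonneg _) hO0' hOle |>.trans_eq rfl
    nlinarith [Real.sqrt_nonneg (Q i), norm_nonneg (w i)]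
end
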